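/- arXiv:2602.11768 — 6 statements merged into one kernel-verified Lean document; each statement's English description precedes it below -/
import Mathlib

section
/- Let e : ℝ → (−∞,+∞] be a convex, lower semicontinuous function with e(0) = e(1) = 0. Define f(u) := sup_{α∈(0,1]} α^{−1}(−(1−α)u − e(α)), s_* := −inf_{α∈ℝ} e(α), s̲₀ := sup_{α∈(0,1]}(−e(α)/α) ∈ [0,+∞] and s̲₁ := sup_{α∈[0,1)}(−e(α)/(1−α)) ∈ [0,+∞] (these equal minus the right derivative of e at 0 and the left derivative of e at 1, respectively). Then s_* ∈ [0,+∞) and: f is non-increasing, convex, lower semicontinuous and takes values in [0,+∞]; f(u) = +∞ for every u < 0; f(0) = s̲₀; f(s_*) = s_*; if s̲₁ < +∞ then f(u) = 0 for every u ≥ s̲₁, while if s̲₁ = +∞ then f(u) → 0 as u → +∞. -/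
open Filter
open scoped ENNReal

set_option maxHeartbeats 2000000 in
/-- **Structure of the Hoeffding function of an entropic pressure.**
Let `e : ℝ → (−∞,+∞]` be convex, lower semicontinuous with `e(0) = e(1) = 0`.  With
`f(u) = sup_{α∈(0,1]} α⁻¹(−(1−α)u − e(α))`, `s_* = −inf_ℝ e`,
`s̲₀ = sup_{α∈(0,1]} (−e(α)/α)` and `s̲₁ = sup_{α∈[0,1)} (−e(α)/(1−α))`, one has:
`s_* ∈ [0,+∞)`; `f` is non-increasing, convex, lower semicontinuous with values in
`[0,+∞]`; `f(u) = +∞` for `u < 0`; `f(0) = s̲₀`; `f(s_*) = s_*`; if `s̲₁ < +∞` then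
`f(u) = 0` for all `u ≥ s̲₁`, while if `s̲₁ = +∞` then `f(u) → 0` as `u → +∞`. -/
theorem hoeffding_function_structure
    (e : ℝ → EReal)
    (hproper : ∀ α : ℝ, e α ≠ ⊥)
    (hconv : ∀ x y p q : ℝ, 0 ≤ p → 0 ≤ q → p + q = 1 →
      e (p * x + q * y) ≤ (p : EReal) * e x + (q : EReal) * e y)
    (hlsc : LowerSemicontinuous e)
    (he0 : e 0 = 0) (he1 : e 1 = 0)
    (f : ℝ → EReal)
    (hf : ∀ u : ℝ, f u = ⨆ α ∈ Set.Ioc (0 : ℝ) 1,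
        ((α⁻¹ : ℝ) : EReal) * (((-(1 - α) * u : ℝ) : EReal) - e α))
    (s0 s1 : EReal)
    (hs0 : s0 = ⨆ α ∈ Set.Ioc (0 : ℝ) 1, (-(e α)) * ((α⁻¹ : ℝ) : EReal))
    (hs1 : s1 = ⨆ α ∈ Set.Ico (0 : ℝ) 1, (-(e α)) * (((1 - α)⁻¹ : ℝ) : EReal)) :
    (∀ u v : ℝ, u ≤ v → f v ≤ f u)
    ∧ (∀ x y p q : ℝ, 0 ≤ p → 0 ≤ q → p + q = 1 →
        f (p * x + q * y) ≤ (p : EReal) * f x + (q : EReal) * f y)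
    ∧ LowerSemicontinuous f
    ∧ (∀ u : ℝ, 0 ≤ f u)
    ∧ (∀ u : ℝ, u < 0 → f u = ⊤)
    ∧ f 0 = s0
    ∧ (∃ sstar : ℝ, 0 ≤ sstar ∧ (⨅ α : ℝ, e α) = ((-sstar : ℝ) : EReal)
        ∧ f sstar = (sstar : EReal))
    ∧ (s1 ≠ ⊤ → ∀ u : ℝ, s1 ≤ (u : EReal) → f u = 0)
    ∧ (s1 = ⊤ → Tendsto f atTop (nhds 0)) := by

  classical
  -- e ≤ 0 on [0,1]
  have hle0 : ∀ α ∈ Set.Icc (0:ℝ) 1, e α ≤ 0 := by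
    intro α hα
    have h := hconv 1 0 α (1 - α) hα.1 (by linarith [hα.2]) (by ring)
    simpa [he0, he1] using h
  have hreal : ∀ α ∈ Set.Icc (0:ℝ) 1, e α = (((e α).toReal : ℝ) : EReal) := by
    intro α hα
    exact (EReal.coe_toReal (ne_top_of_le_ne_top (by simp) (hle0 α hα)) (hproper α)).symm
  set E : ℝ → ℝ := fun α => (e α).toReal with hE
  have hEle0 : ∀ α ∈ Set.Icc (0:ℝ) 1, E α ≤ 0 := by
    intro α hα
    have := hle0 α hα
    rw [hreal α hα] at this
    exact_mod_cast this
  -- e ≥ 0 outside [0,1]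
  have hout : ∀ α : ℝ, α ∉ Set.Icc (0:ℝ) 1 → 0 ≤ e α := by
    intro α hα
    rw [Set.mem_Icc, not_and_or] at hα
    have key : ∀ c : ℝ, 0 < c → 0 ≤ (c : EReal) * e α → 0 ≤ e α := by
      intro c hc h
      have : (0:EReal) ≤ ((c⁻¹ : ℝ) : EReal) * (((c:ℝ) : EReal) * e α) := by
        have := mul_le_mul_of_nonneg_left h (EReal.coe_nonneg.2 (inv_pos.2 hc).le)
        rwa [mul_zero] at this
      rwa [← mul_assoc, ← EReal.coe_mul, inv_mul_cancel₀ hc.ne', EReal.coe_one, one_mul] at this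
    rcases hα with hα | hα
    · push_neg at hα
      have hp : (0:ℝ) ≤ (1 - α)⁻¹ := inv_nonneg.2 (by linarith)
      have hq : (0:ℝ) ≤ -α / (1 - α) := by
        apply div_nonneg <;> linarith
      have hsum : (1 - α)⁻¹ + -α / (1 - α) = 1 := by
        rw [inv_eq_one_div, ← add_div, div_eq_one_iff_eq (by linarith : (1:ℝ) - α ≠ 0)]
        ring
      have h := hconv α 1 ((1 - α)⁻¹) (-α / (1 - α)) hp hq hsum
      have harg : (1 - α)⁻¹ * α + -α / (1 - α) * 1 = 0 := by
        field_simp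
        ring
      rw [harg, he0, he1, mul_zero, add_zero] at h
      exact key _ (inv_pos.2 (by linarith)) h
    · push_neg at hα
      have hq : (0:ℝ) ≤ α⁻¹ := by positivity
      have hp : (0:ℝ) ≤ 1 - α⁻¹ := by
        have : α⁻¹ ≤ 1 := by
          rw [inv_le_one_iff₀]; right; linarith
        linarith
      have hsum : (1 - α⁻¹) + α⁻¹ = 1 := by ring
      have h := hconv 0 α (1 - α⁻¹) α⁻¹ hp hq hsum
      have harg : (1 - α⁻¹) * 0 + α⁻¹ * α = 1 := by
        field_simp
        ring
      rw [harg, he0, he1, mul_zero, zero_add] at h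
      exact key _ (by positivity) h
  -- lower bound on [0,1]
  have hlowB : ∀ α ∈ Set.Icc (0:ℝ) 1, 2 * E (1/2) ≤ E α := by
    intro α hα
    have hhalf : (1/2 : ℝ) ∈ Set.Icc (0:ℝ) 1 := by norm_num
    rcases le_or_gt α (1/2) with hc | hc
    · set p : ℝ := 1 / (2 * (1 - α)) with hp
      have h1α : (0:ℝ) < 1 - α := by linarith [hc]
      have hp12 : (1/2 : ℝ) ≤ p := by
        rw [hp, le_div_iff₀ (by linarith)]; nlinarith [hα.1]
      have hp1 : p ≤ 1 := by
        rw [hp, div_le_one (by linarith)]; linarith [hα.1]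
      have h := hconv α 1 p (1 - p) (by linarith) (by linarith) (by ring)
      have harg : p * α + (1 - p) * 1 = 1/2 := by
        rw [hp]; field_simp; ring
      rw [harg, he1, mul_zero, add_zero, hreal α hα, hreal _ hhalf,
        ← EReal.coe_mul, EReal.coe_le_coe_iff] at h
      have hEα := hEle0 α hα
      nlinarith [h, hEα, hp12, hp1]
    · set q : ℝ := 1 / (2 * α) with hq
      have hαpos : (0:ℝ) < α := by linarith
      have hq12 : (1/2 : ℝ) ≤ q := by
        rw [hq, le_div_iff₀ (by linarith [hα.2])]; linarith [hα.2]
      have hq1 : q ≤ 1 := by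
        rw [hq, div_le_one (by linarith)]; linarith
      have h := hconv α 0 q (1 - q) (by linarith) (by linarith) (by ring)
      have harg : q * α + (1 - q) * 0 = 1/2 := by
        rw [hq]; field_simp; ring
      rw [harg, he0, mul_zero, add_zero, hreal α hα, hreal _ hhalf,
        ← EReal.coe_mul, EReal.coe_le_coe_iff] at h
      have hEα := hEle0 α hα
      nlinarith [h, hEα, hq12, hq1]
  -- the infimum
  set I : EReal := ⨅ α : ℝ, e α with hI
  have hIub : I ≤ 0 := by
    rw [hI]
    exact (iInf_le _ 0).trans_eq he0
  have hIlb : ((2 * E (1/2) : ℝ) : EReal) ≤ I := by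
    rw [hI]
    refine le_iInf fun α => ?_
    by_cases hα : α ∈ Set.Icc (0:ℝ) 1
    · rw [hreal α hα]
      exact_mod_cast hlowB α hα
    · refine le_trans ?_ (hout α hα)
      have hE12 : E (1/2) ≤ 0 := hEle0 _ (by norm_num)
      exact_mod_cast (by linarith : 2 * E (1/2) ≤ 0)
  have hInetop : I ≠ ⊤ := ne_top_of_le_ne_top (by simp) hIub
  have hInebot : I ≠ ⊥ := by
    intro h
    rw [h, le_bot_iff] at hIlb
    exact EReal.coe_ne_bot _ hIlb
  set sstar : ℝ := -I.toReal with hsstar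
  have hIcoe : I = ((-sstar : ℝ) : EReal) := by
    rw [hsstar, neg_neg, EReal.coe_toReal hInetop hInebot]
  have hsnn : 0 ≤ sstar := by
    have : ((-sstar : ℝ) : EReal) ≤ 0 := hIcoe ▸ hIub
    have := EReal.coe_nonpos.1 this
    linarith
  have hge : ∀ α : ℝ, ((-sstar : ℝ) : EReal) ≤ e α := fun α => hIcoe ▸ (hI ▸ iInf_le _ α)
  have hgeE : ∀ α ∈ Set.Icc (0:ℝ) 1, -sstar ≤ E α := by
    intro α hα
    have := hge α
    rw [hreal α hα] at this
    exact_mod_cast this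
  -- real-valued form of the terms
  set T : ℝ → ℝ → ℝ := fun α u => α⁻¹ * (-(1 - α) * u - E α) with hT
  have hIoc : ∀ α : ℝ, α ∈ Set.Ioc (0:ℝ) 1 → α ∈ Set.Icc (0:ℝ) 1 :=
    fun α hα => ⟨hα.1.le, hα.2⟩
  have hterm : ∀ u : ℝ, ∀ α ∈ Set.Ioc (0:ℝ) 1,
      ((α⁻¹ : ℝ) : EReal) * (((-(1 - α) * u : ℝ) : EReal) - e α) = ((T α u : ℝ) : EReal) := by
    intro u α hα
    rw [hreal α (hIoc α hα), ← EReal.coe_sub, ← EReal.coe_mul]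
  have hfT : ∀ u : ℝ, f u = ⨆ α ∈ Set.Ioc (0:ℝ) 1, ((T α u : ℝ) : EReal) := by
    intro u
    rw [hf u]
    exact biSup_congr (hterm u)
  have hE1 : E 1 = 0 := by rw [hE]; simp [he1]
  have hE0 : E 0 = 0 := by rw [hE]; simp [he0]
  -- nonnegativity
  have h0le : ∀ u : ℝ, 0 ≤ f u := by
    intro u
    rw [hfT u]
    have h1 : ((T 1 u : ℝ) : EReal) ≤ ⨆ α ∈ Set.Ioc (0:ℝ) 1, ((T α u : ℝ) : EReal) :=
      le_iSup₂ (f := fun α _ => ((T α u : ℝ) : EReal)) 1 ⟨one_pos, le_refl 1⟩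
    have : T 1 u = 0 := by rw [hT]; simp [hE1]
    rw [this] at h1
    exact_mod_cast h1
  -- antitone
  have hanti : ∀ u v : ℝ, u ≤ v → f v ≤ f u := by
    intro u v huv
    rw [hfT u, hfT v]
    refine iSup₂_le fun α hα => ?_
    refine le_trans ?_ (le_iSup₂ (f := fun α _ => ((T α u : ℝ) : EReal)) α hα)
    rw [EReal.coe_le_coe_iff, hT]
    have h1 : -(1 - α) * v - E α ≤ -(1 - α) * u - E α := by nlinarith [hα.2]
    exact mul_le_mul_of_nonneg_left h1 (inv_nonneg.2 hα.1.le)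
  -- convexity
  have hconvf : ∀ x y p q : ℝ, 0 ≤ p → 0 ≤ q → p + q = 1 →
      f (p * x + q * y) ≤ (p : EReal) * f x + (q : EReal) * f y := by
    intro x y p q hp hq hpq
    rw [hfT (p * x + q * y), hfT x, hfT y]
    refine iSup₂_le fun α hα => ?_
    have hTx : ((T α x : ℝ) : EReal) ≤ ⨆ α ∈ Set.Ioc (0:ℝ) 1, ((T α x : ℝ) : EReal) :=
      le_iSup₂ (f := fun α _ => ((T α x : ℝ) : EReal)) α hα
    have hTy : ((T α y : ℝ) : EReal) ≤ ⨆ α ∈ Set.Ioc (0:ℝ) 1, ((T α y : ℝ) : EReal) :=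
      le_iSup₂ (f := fun α _ => ((T α y : ℝ) : EReal)) α hα
    have hsplit : T α (p * x + q * y) = p * T α x + q * T α y := by
      have hq' : q = 1 - p := by linarith
      subst hq'
      rw [hT]; ring
    calc ((T α (p * x + q * y) : ℝ) : EReal)
        = (p : EReal) * ((T α x : ℝ) : EReal) + (q : EReal) * ((T α y : ℝ) : EReal) := by
          rw [hsplit]; push_cast; rfl
      _ ≤ (p : EReal) * (⨆ α ∈ Set.Ioc (0:ℝ) 1, ((T α x : ℝ) : EReal))
          + (q : EReal) * (⨆ α ∈ Set.Ioc (0:ℝ) 1, ((T α y : ℝ) : EReal)) :=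
          add_le_add (mul_le_mul_of_nonneg_left hTx (EReal.coe_nonneg.2 hp))
            (mul_le_mul_of_nonneg_left hTy (EReal.coe_nonneg.2 hq))
  -- lower semicontinuity
  have hlscf : LowerSemicontinuous f := by
    have hfun : f = fun u => ⨆ α ∈ Set.Ioc (0:ℝ) 1, ((T α u : ℝ) : EReal) := funext hfT
    rw [hfun]
    refine lowerSemicontinuous_biSup fun α hα => ?_
    exact (continuous_coe_real_ereal.comp (by fun_prop)).lowerSemicontinuous
  -- f u = ⊤ for u < 0
  have htop : ∀ u : ℝ, u < 0 → f u = ⊤ := by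
    intro u hu
    rw [hfT u, EReal.eq_top_iff_forall_lt]
    intro y
    set α : ℝ := min (1/2) (-u / (2 * (|y| + 1))) with hα
    have hy1 : (0:ℝ) < |y| + 1 := by positivity
    have hαpos : 0 < α := lt_min (by norm_num) (div_pos (by linarith) (by positivity))
    have hα12 : α ≤ 1/2 := min_le_left _ _
    have hα2 : α ≤ -u / (2 * (|y| + 1)) := min_le_right _ _
    have hαmem : α ∈ Set.Ioc (0:ℝ) 1 := ⟨hαpos, by linarith⟩
    refine lt_of_lt_of_le ?_ (le_iSup₂ (f := fun α _ => ((T α u : ℝ) : EReal)) α hαmem)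
    rw [EReal.coe_lt_coe_iff]
    have hEα : E α ≤ 0 := hEle0 α (hIoc α hαmem)
    have hkey : α * (|y| + 1) ≤ -u / 2 := by
      rw [le_div_iff₀ (by positivity)] at hα2
      rw [le_div_iff₀ (by norm_num : (0:ℝ) < 2)]
      nlinarith
    have h1 : |y| + 1 ≤ α⁻¹ * (-u / 2) := by
      rw [inv_mul_eq_div, le_div_iff₀ hαpos]
      linarith [hkey]
    have h2 : α⁻¹ * (-u / 2) ≤ T α u := by
      rw [hT]
      refine mul_le_mul_of_nonneg_left ?_ (inv_nonneg.2 hαpos.le)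
      nlinarith
    calc y ≤ |y| := le_abs_self y
      _ < |y| + 1 := by linarith
      _ ≤ T α u := le_trans h1 h2
  -- f 0 = s0
  have hf0 : f 0 = s0 := by
    rw [hf 0, hs0]
    refine biSup_congr fun α hα => ?_
    rw [mul_comm]
    congr 1
    rw [show -(1 - α) * (0:ℝ) = 0 by ring, EReal.coe_zero, sub_eq_add_neg, zero_add]
  -- f sstar = sstar
  have hfsstar : f sstar = (sstar : EReal) := by
    refine le_antisymm ?_ ?_
    · rw [hfT sstar]
      refine iSup₂_le fun α hα => ?_
      rw [EReal.coe_le_coe_iff, hT]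
      have hEα := hgeE α (hIoc α hα)
      have hin : -(1 - α) * sstar - E α ≤ α * sstar := by nlinarith
      calc α⁻¹ * (-(1 - α) * sstar - E α) ≤ α⁻¹ * (α * sstar) :=
            mul_le_mul_of_nonneg_left hin (inv_nonneg.2 hα.1.le)
        _ = sstar := by rw [← mul_assoc, inv_mul_cancel₀ hα.1.ne', one_mul]
    · rcases eq_or_lt_of_le hsnn with hs0' | hs0'
      · rw [← hs0', EReal.coe_zero]; exact h0le 0
      · by_contra hcon
        push_neg at hcon
        obtain ⟨r, hr1, hr2⟩ := EReal.exists_between_coe_real hcon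
        rw [EReal.coe_lt_coe_iff] at hr2
        -- lsc at 0 gives a neighbourhood where e > -sstar/2
        have hlsc0 := hlsc 0 (((-(sstar/2) : ℝ)) : EReal) (by
          show ((-(sstar/2) : ℝ) : EReal) < e 0
          rw [he0, ← EReal.coe_zero, EReal.coe_lt_coe_iff]; linarith)
        rw [Metric.eventually_nhds_iff] at hlsc0
        obtain ⟨η, hηpos, hη⟩ := hlsc0
        set δ : ℝ := min (sstar/2) ((sstar - r) * η / 2) with hδ
        have hδpos : 0 < δ := lt_min (by linarith) (div_pos (mul_pos (by linarith) hηpos) (by norm_num))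
        have hδ1 : δ ≤ sstar/2 := min_le_left _ _
        have hδ2 : δ ≤ (sstar - r) * η / 2 := min_le_right _ _
        have hlt : I < ((-sstar + δ : ℝ) : EReal) := by
          rw [hIcoe, EReal.coe_lt_coe_iff]; linarith
        rw [hI, iInf_lt_iff] at hlt
        obtain ⟨α₀, hα₀⟩ := hlt
        have hneg : ((-sstar + δ : ℝ) : EReal) ≤ ((-(sstar/2) : ℝ) : EReal) := by
          rw [EReal.coe_le_coe_iff]; linarith
        have hα₀Icc : α₀ ∈ Set.Icc (0:ℝ) 1 := by
          by_contra hmem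
          exact absurd (le_trans (hout α₀ hmem) hα₀.le)
            (by rw [not_le, ← EReal.coe_zero, EReal.coe_lt_coe_iff]; linarith)
        have hEα₀ : E α₀ < -sstar + δ := by
          have := hα₀
          rw [hreal α₀ hα₀Icc, EReal.coe_lt_coe_iff] at this
          exact this
        have hηα₀ : η ≤ α₀ := by
          by_contra hlt'
          push_neg at hlt'
          have hd : dist α₀ 0 < η := by
            rw [Real.dist_eq, sub_zero, abs_of_nonneg hα₀Icc.1]; exact hlt'
          have := hη hd
          exact absurd (lt_of_lt_of_le hα₀ hneg) (not_lt.2 this.le)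
        have hα₀mem : α₀ ∈ Set.Ioc (0:ℝ) 1 := ⟨lt_of_lt_of_le hηpos hηα₀, hα₀Icc.2⟩
        have hTbig : r < T α₀ sstar := by
          show r < α₀⁻¹ * (-(1 - α₀) * sstar - E α₀)
          rw [inv_mul_eq_div, lt_div_iff₀ hα₀mem.1]
          nlinarith [mul_nonneg (sub_nonneg.2 hηα₀) (sub_pos.2 hr2).le,
            mul_pos hηpos (sub_pos.2 hr2)]
        have : ((r:ℝ):EReal) < f sstar := by
          rw [hfT sstar]
          exact lt_of_lt_of_le (EReal.coe_lt_coe_iff.2 hTbig)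
            (le_iSup₂ (f := fun α _ => ((T α sstar : ℝ) : EReal)) α₀ hα₀mem)
        exact absurd hr1 (not_lt.2 this.le)
  -- s1 nonneg
  have hs1nn : 0 ≤ s1 := by
    rw [hs1]
    refine le_trans ?_ (le_iSup₂ (f := fun α (_ : α ∈ Set.Ico (0:ℝ) 1) =>
      (-(e α)) * (((1 - α)⁻¹ : ℝ) : EReal)) 0 ⟨le_refl 0, zero_lt_one⟩)
    rw [he0, neg_zero, zero_mul]
  -- s1 finite case
  have hfin : s1 ≠ ⊤ → ∀ u : ℝ, s1 ≤ (u : EReal) → f u = 0 := by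
    intro hne u hu
    have hs1nebot : s1 ≠ ⊥ := fun h => by rw [h, le_bot_iff] at hs1nn; simp at hs1nn
    set R : ℝ := s1.toReal with hR
    have hs1coe : s1 = ((R : ℝ) : EReal) := (EReal.coe_toReal hne hs1nebot).symm
    have hRnn : 0 ≤ R := by
      have := hs1coe ▸ hs1nn
      exact_mod_cast this
    have hRu : R ≤ u := by
      rw [hs1coe, EReal.coe_le_coe_iff] at hu
      exact hu
    refine le_antisymm ?_ (h0le u)
    rw [hfT u]
    refine iSup₂_le fun α hα => ?_
    rw [show (0 : EReal) = ((0:ℝ) : EReal) from rfl, EReal.coe_le_coe_iff]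
    rcases eq_or_lt_of_le hα.2 with h1 | h1
    · subst h1
      show (1:ℝ)⁻¹ * (-(1 - 1) * u - E 1) ≤ 0
      simp [hE1]
    · have hub : (-(e α)) * (((1 - α)⁻¹ : ℝ) : EReal) ≤ s1 :=
        hs1 ▸ le_iSup₂ (f := fun α (_ : α ∈ Set.Ico (0:ℝ) 1) =>
          (-(e α)) * (((1 - α)⁻¹ : ℝ) : EReal)) α ⟨hα.1.le, h1⟩
      rw [hs1coe, hreal α (hIoc α hα), ← EReal.coe_neg, ← EReal.coe_mul,
        EReal.coe_le_coe_iff] at hub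
      have h1α : (0:ℝ) < 1 - α := by linarith
      have hEub : -E α ≤ R * (1 - α) := by
        rw [← div_eq_mul_inv, div_le_iff₀ h1α] at hub
        linarith
      show α⁻¹ * (-(1 - α) * u - E α) ≤ 0
      have hinner : -(1 - α) * u - E α ≤ 0 := by nlinarith
      exact mul_nonpos_iff.2 (Or.inl ⟨inv_nonneg.2 hα.1.le, hinner⟩)
  -- tendsto
  have htend : Tendsto f atTop (nhds (0 : EReal)) := by
    rw [tendsto_order]
    constructor
    · intro a ha
      exact Eventually.of_forall fun u => lt_of_lt_of_le ha (h0le u)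
    · intro b hb
      obtain ⟨c, hc1, hc2⟩ := exists_between hb
      set ε : ℝ := c.toReal with hε
      have hccoe : ((ε : ℝ) : EReal) = c := EReal.coe_toReal hc2.ne_top (hc1.ne_bot)
      have hεpos : 0 < ε := by
        rw [← EReal.coe_lt_coe_iff (x := 0), EReal.coe_zero, hccoe]
        exact hc1
      -- bound the bad set
      set K : Set ℝ := {α | e α ≤ ((-ε : ℝ) : EReal)} ∩ Set.Icc (0:ℝ) 1 with hK
      have hKcl : IsClosed K := by
        refine IsClosed.inter ?_ isClosed_Icc
        exact hlsc.isClosed_preimage _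
      have hbd : ∃ b' : ℝ, 0 ≤ b' ∧ b' < 1 ∧ ∀ α ∈ Set.Icc (0:ℝ) 1,
          e α ≤ ((-ε : ℝ) : EReal) → α ≤ b' := by
        rcases Set.eq_empty_or_nonempty K with hemp | hne
        · refine ⟨0, le_refl 0, zero_lt_one, fun α hα hle => ?_⟩
          exact absurd (show α ∈ K from ⟨hle, hα⟩) (hemp ▸ Set.notMem_empty α)
        · have hbdd : BddAbove K := (bddAbove_Icc).mono Set.inter_subset_right
          have hmem := hKcl.csSup_mem hne hbdd
          refine ⟨sSup K, hmem.2.1, ?_, fun α hα hle => le_csSup hbdd ⟨hle, hα⟩⟩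
          rcases eq_or_lt_of_le hmem.2.2 with h1 | h1
          · exfalso
            have h2 : e (sSup K) ≤ ((-ε : ℝ) : EReal) := hmem.1
            rw [h1, he1, show ((0:EReal)) = (((0:ℝ)):EReal) from rfl,
              EReal.coe_le_coe_iff] at h2
            linarith
          · exact h1
      obtain ⟨b', hb'0, hb'1, hb'⟩ := hbd
      set m : ℝ := sstar / (1 - b') with hm
      have h1b' : (0:ℝ) < 1 - b' := by linarith
      have hmval : (1 - b') * m = sstar := by
        rw [hm]; field_simp
      have hmnn : 0 ≤ m := div_nonneg hsnn h1b'.le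
      set u₀ : ℝ := m + ε with hu₀
      have hbound : ∀ u : ℝ, u₀ ≤ u → f u ≤ ((ε : ℝ) : EReal) := by
        intro u huu
        have huε : ε ≤ u := by linarith [hmnn]
        rw [hfT u]
        refine iSup₂_le fun α hα => ?_
        rw [EReal.coe_le_coe_iff]
        show α⁻¹ * (-(1 - α) * u - E α) ≤ ε
        rw [inv_mul_eq_div, div_le_iff₀ hα.1]
        rcases le_or_gt (E α) (-ε) with hc | hc
        · have hαb' : α ≤ b' := by
            refine hb' α (hIoc α hα) ?_
            rw [hreal α (hIoc α hα), EReal.coe_le_coe_iff]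
            exact hc
          have hsub : -E α ≤ sstar := by linarith [hgeE α (hIoc α hα)]
          have p1 : (0:ℝ) ≤ (1 - α) * (u - (m + ε)) :=
            mul_nonneg (by linarith [hα.2]) (by linarith)
          have p2 : (0:ℝ) ≤ (b' - α) * m := mul_nonneg (by linarith) hmnn
          have p3 : (0:ℝ) ≤ (1 - α) * ε := mul_nonneg (by linarith [hα.2]) hεpos.le
          have p4 : (0:ℝ) ≤ ε * α := mul_nonneg hεpos.le hα.1.le
          nlinarith [p1, p2, p3, p4, hmval, hsub]
        · have p1 : (0:ℝ) ≤ (1 - α) * (u - ε) :=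
            mul_nonneg (by linarith [hα.2]) (by linarith)
          nlinarith [p1, hc.le]
      filter_upwards [eventually_ge_atTop u₀] with u hu
      exact lt_of_le_of_lt (hbound u hu) (hccoe ▸ hc2)
  exact ⟨hanti, hconvf, hlscf, h0le, htop, hf0, ⟨sstar, hsnn, hIcoe, hfsstar⟩,
    hfin, fun _ => htend⟩
end

section
/- Let e : ℝ → (−∞,+∞] be convex, lower semicontinuous with e(0) = e(1) = 0. Define İ(s) := sup_{α∈ℝ}(−αs − e(α)), f(u) := sup_{α∈(0,1]} α^{−1}(−(1−α)u − e(α)), g(u) := f(u) − u, s̲₀ := sup_{α∈(0,1]}(−e(α)/α) and s̲₁ := sup_{α∈[0,1)}(−e(α)/(1−α)). Then İ is strictly decreasing on the open interval (−s̲₁, s̲₀) and maps it homeomorphically onto (0, s̲₁); the inverse homeomorphism is the restriction of g to (0, s̲₁); in particular f(İ(s)) = İ(s) + s for every s ∈ (−s̲₁, s̲₀). Moreover, if s̲₀ < +∞ then g(0) = s̲₀ and İ(s̲₀) = 0, and if s̲₁ < +∞ then g(s̲₁) = −s̲₁ and İ(−s̲₁) = s̲₁. -/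
open scoped ENNReal
open Set

lemma hoeff_lscMin {Ψ : ℝ → EReal} (h : LowerSemicontinuous Ψ) {K : Set ℝ}
    (hK : IsCompact K) (hne : K.Nonempty) : ∃ x ∈ K, ∀ y ∈ K, Ψ x ≤ Ψ y := by
  by_contra hc
  push_neg at hc
  have hc' : ∀ x : ℝ, ∃ y : ℝ, x ∈ K → (y ∈ K ∧ Ψ y < Ψ x) := by
    intro x
    by_cases hx : x ∈ K
    · obtain ⟨y, hy, hlt⟩ := hc x hx
      exact ⟨y, fun _ => ⟨hy, hlt⟩⟩
    · exact ⟨0, fun hx' => absurd hx' hx⟩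
  choose Y hY using hc'
  obtain ⟨t, htK, hcov⟩ := hK.elim_nhds_subcover (fun x => Ψ ⁻¹' Set.Ioi (Ψ (Y x)))
    (fun x hx => (h.isOpen_preimage _).mem_nhds (hY x hx).2)
  have htne : t.Nonempty := by
    rcases hne with ⟨x, hx⟩
    rcases Set.mem_iUnion₂.mp (hcov hx) with ⟨i, hi, _⟩
    exact ⟨i, hi⟩
  obtain ⟨x₀, hx₀t, hmin⟩ := t.exists_min_image (fun x => Ψ (Y x)) htne
  have hYK : Y x₀ ∈ K := (hY x₀ (htK x₀ hx₀t)).1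
  rcases Set.mem_iUnion₂.mp (hcov hYK) with ⟨i, hi, hmem⟩
  exact absurd (hmin i hi) (not_le.mpr hmem)

lemma hoeff_psiLsc (e : ℝ → EReal) (hproper : ∀ α : ℝ, e α ≠ ⊥)
    (hlsc : LowerSemicontinuous e) (s : ℝ) :
    LowerSemicontinuous (fun α : ℝ => e α + ((s * α : ℝ) : EReal)) := by
  intro x y hy
  change y < e x + ((s * x : ℝ) : EReal) at hy
  have hcont : Continuous fun α : ℝ => s * α := continuous_const.mul continuous_id
  by_cases htop : e x = ⊤
  · have hΨ : e x + ((s * x : ℝ) : EReal) = ⊤ := by rw [htop]; exact EReal.top_add_coe _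
    rw [hΨ] at hy
    obtain ⟨r, hyr, -⟩ := EReal.lt_iff_exists_real_btwn.mp hy
    have h1 : ∀ᶠ α in nhds x, ((r - s * x + 1 : ℝ) : EReal) < e α :=
      hlsc x _ (by show _ < e x; rw [htop]; exact EReal.coe_lt_top _)
    have h2 : ∀ᶠ α in nhds x, s * x - 1 < s * α :=
      (hcont.tendsto x).eventually (eventually_gt_nhds (by linarith))
    filter_upwards [h1, h2] with α hα1 hα2
    show y < e α + ((s * α : ℝ) : EReal)
    refine lt_trans hyr ?_
    have hsplit : ((r : ℝ) : EReal) = ((r - s * x + 1 : ℝ) : EReal) + ((s * x - 1 : ℝ) : EReal) := by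
      norm_cast; ring
    rw [hsplit]
    exact EReal.add_lt_add hα1 (by exact_mod_cast hα2)
  · set c : ℝ := (e x).toReal with hc
    have hreal : e x = (c : EReal) := (EReal.coe_toReal htop (hproper x)).symm
    rw [hreal] at hy
    have hy' : y < ((c + s * x : ℝ) : EReal) := by
      rwa [EReal.coe_add]
    obtain ⟨r, hyr, hr2⟩ := EReal.lt_iff_exists_real_btwn.mp hy'
    have hr2' : r < c + s * x := by exact_mod_cast hr2
    set δ : ℝ := (c + s * x - r) / 2 with hδ
    have hδpos : 0 < δ := by rw [hδ]; linarith
    have h1 : ∀ᶠ α in nhds x, ((c - δ : ℝ) : EReal) < e α :=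
      hlsc x _ (by show _ < e x; rw [hreal]; exact_mod_cast (by linarith : c - δ < c))
    have h2 : ∀ᶠ α in nhds x, s * x - δ < s * α :=
      (hcont.tendsto x).eventually (eventually_gt_nhds (by linarith))
    filter_upwards [h1, h2] with α hα1 hα2
    show y < e α + ((s * α : ℝ) : EReal)
    refine lt_trans hyr ?_
    have hsplit : ((r : ℝ) : EReal) ≤ ((c - δ : ℝ) : EReal) + ((s * x - δ : ℝ) : EReal) := by
      norm_cast; rw [hδ]; linarith
    exact lt_of_le_of_lt hsplit (EReal.add_lt_add hα1 (by exact_mod_cast hα2))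

lemma hoeff_key (e : ℝ → EReal)
    (hproper : ∀ α : ℝ, e α ≠ ⊥)
    (hconv : ∀ x y p q : ℝ, 0 ≤ p → 0 ≤ q → p + q = 1 →
      e (p * x + q * y) ≤ (p : EReal) * e x + (q : EReal) * e y)
    (hlsc : LowerSemicontinuous e)
    (he0 : e 0 = 0) (he1 : e 1 = 0)
    (hle0 : ∀ α ∈ Icc (0:ℝ) 1, e α ≤ 0)
    (s : ℝ)
    (α₀ : ℝ) (hα₀ : α₀ ∈ Ioc (0:ℝ) 1) (h₀ : (e α₀).toReal + s * α₀ < 0)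
    (α₁ : ℝ) (hα₁ : α₁ ∈ Ico (0:ℝ) 1) (h₁ : (e α₁).toReal + s * α₁ < s) :
    ∃ β, β ∈ Ioc (0:ℝ) 1 ∧ (e β).toReal + s * β < 0 ∧
      (∀ γ ∈ Icc (0:ℝ) 1, (e β).toReal + s * β ≤ (e γ).toReal + s * γ) ∧
      (⨆ α : ℝ, ((-α * s : ℝ) : EReal) - e α) = ((-((e β).toReal + s * β) : ℝ) : EReal) := by
  have hreal : ∀ γ ∈ Icc (0:ℝ) 1, e γ = (((e γ).toReal : ℝ) : EReal) := fun γ hγ =>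
    (EReal.coe_toReal ((lt_of_le_of_lt (hle0 γ hγ) (by norm_num : (0:EReal) < ⊤)).ne) (hproper γ)).symm
  obtain ⟨β, hβIcc, hβmin⟩ := hoeff_lscMin (hoeff_psiLsc e hproper hlsc s) isCompact_Icc
    (⟨0, by norm_num⟩ : (Icc (0:ℝ) 1).Nonempty)
  have hα₀Icc : α₀ ∈ Icc (0:ℝ) 1 := ⟨le_of_lt hα₀.1, hα₀.2⟩
  have hα₁Icc : α₁ ∈ Icc (0:ℝ) 1 := ⟨hα₁.1, le_of_lt hα₁.2⟩
  have hψmin : ∀ γ ∈ Icc (0:ℝ) 1, (e β).toReal + s * β ≤ (e γ).toReal + s * γ := by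
    intro γ hγ
    have := hβmin γ hγ
    rw [hreal β hβIcc, hreal γ hγ] at this
    exact_mod_cast this
  have hβneg : (e β).toReal + s * β < 0 := lt_of_le_of_lt (hψmin α₀ hα₀Icc) h₀
  have hβpos : 0 < β := by
    rcases hβIcc.1.lt_or_eq with h | h
    · exact h
    · exfalso; rw [← h] at hβneg; rw [he0] at hβneg
      simp at hβneg
  have hβIoc : β ∈ Ioc (0:ℝ) 1 := ⟨hβpos, hβIcc.2⟩
  have her1 : (e 1).toReal = 0 := by rw [he1]; simp
  have hub : ∀ α : ℝ, ((-α * s : ℝ) : EReal) - e α ≤ ((-((e β).toReal + s * β) : ℝ) : EReal) := by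
    intro α
    by_cases ht : e α = ⊤
    · simp [ht]
    · have hr : e α = (((e α).toReal : ℝ) : EReal) := (EReal.coe_toReal ht (hproper α)).symm
      set r : ℝ := (e α).toReal with hrdef
      rw [hr, show ((-α * s : ℝ) : EReal) - (r : EReal) = ((-α * s - r : ℝ) : EReal) from by norm_cast]
      rw [EReal.coe_le_coe_iff]
      have key : (e β).toReal + s * β ≤ r + s * α := by
        rcases le_or_gt 0 α with hα0 | hα0
        · rcases le_or_gt α 1 with hα1' | hα1'
          · -- α ∈ Icc 0 1
            exact hψmin α ⟨hα0, hα1'⟩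
          · -- α > 1 : chord through α₁ and α
            set r₁ : ℝ := (e α₁).toReal with hr₁def
            have hd : (0:ℝ) < α - α₁ := by linarith [hα₁.2]
            set p : ℝ := (α - 1) / (α - α₁) with hp'
            set q : ℝ := (1 - α₁) / (α - α₁) with hq'
            have hp : 0 ≤ p := div_nonneg (by linarith) hd.le
            have hq : 0 ≤ q := div_nonneg (by linarith [hα₁.2]) hd.le
            have hpq : p + q = 1 := by rw [hp', hq']; field_simp; try ring
            have hcomb := hconv α₁ α p q hp hq hpq
            have hzero : p * α₁ + q * α = 1 := by rw [hp', hq']; field_simp; try ring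
            rw [hzero, he1, hr, hreal α₁ hα₁Icc] at hcomb
            rw [show ((p:ℝ):EReal) * ((r₁:ℝ):EReal) + ((q:ℝ):EReal) * ((r:ℝ):EReal)
                = ((p * r₁ + q * r : ℝ) : EReal) from by norm_cast] at hcomb
            have hcomb' : (0:ℝ) ≤ p * r₁ + q * r := by exact_mod_cast hcomb
            have h5 : (p * r₁ + q * r) * (α - α₁) = (α - 1) * r₁ + (1 - α₁) * r := by
              rw [hp', hq']; field_simp; try ring
            have h6 : 0 ≤ (α - 1) * r₁ + (1 - α₁) * r := by
              rw [← h5]; exact mul_nonneg hcomb' hd.le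
            have h7 : (e β).toReal + s * β ≤ s := by
              have := hψmin 1 (by norm_num)
              rwa [her1, zero_add, mul_one] at this
            -- from h₁ : r₁ + s*α₁ < s and h6, α > 1, α₁ < 1 derive s ≤ r + s*α
            nlinarith [hα₁.2, mul_pos (by linarith : (0:ℝ) < α - 1) (by linarith [hα₁.2] : (0:ℝ) < 1 - α₁)]
        · -- α < 0 : chord through α and α₀
          set r₀ : ℝ := (e α₀).toReal with hr₀def
          have hd : (0:ℝ) < α₀ - α := by linarith [hα₀.1]
          set p : ℝ := α₀ / (α₀ - α) with hp'
          set q : ℝ := -α / (α₀ - α) with hq'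
          have hp : 0 ≤ p := div_nonneg hα₀.1.le hd.le
          have hq : 0 ≤ q := div_nonneg (by linarith) hd.le
          have hpq : p + q = 1 := by rw [hp', hq']; field_simp; try ring
          have hcomb := hconv α α₀ p q hp hq hpq
          have hzero : p * α + q * α₀ = 0 := by rw [hp', hq']; field_simp; try ring
          rw [hzero, he0, hr, hreal α₀ hα₀Icc] at hcomb
          rw [show ((p:ℝ):EReal) * ((r:ℝ):EReal) + ((q:ℝ):EReal) * ((r₀:ℝ):EReal)
              = ((p * r + q * r₀ : ℝ) : EReal) from by norm_cast] at hcomb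
          have hcomb' : (0:ℝ) ≤ p * r + q * r₀ := by exact_mod_cast hcomb
          have h5 : (p * r + q * r₀) * (α₀ - α) = α₀ * r - α * r₀ := by
            rw [hp', hq']; field_simp; try ring
          have h6 : 0 ≤ α₀ * r - α * r₀ := by rw [← h5]; exact mul_nonneg hcomb' hd.le
          have h7 : 0 < α * (r₀ + s * α₀) := mul_pos_of_neg_of_neg hα0 h₀
          -- α₀*(r + s*α) ≥ α*(r₀ + s*α₀) > 0 so r + s*α > 0 > eβ + sβ
          nlinarith [hα₀.1]
      linarith
  refine ⟨β, hβIoc, hβneg, hψmin, le_antisymm (iSup_le hub) ?_⟩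
  have hcast : ((-((e β).toReal + s * β) : ℝ) : EReal)
      = ((-β * s : ℝ) : EReal) - (((e β).toReal : ℝ) : EReal) := by
    norm_cast; ring
  rw [hcast, ← hreal β hβIcc]
  exact le_iSup (fun α : ℝ => ((-α * s : ℝ) : EReal) - e α) β


set_option maxHeartbeats 1000000 in
/-- **The Hoeffding function inverts the rate function.**
Let `e : ℝ → (−∞,+∞]` be convex, lower semicontinuous with `e(0) = e(1) = 0`, and set
`İ(s) = sup_α (−αs − e(α))`, `f(u) = sup_{α∈(0,1]} α⁻¹(−(1−α)u − e(α))`,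
`g(u) = f(u) − u`, `s̲₀ = sup_{α∈(0,1]} (−e(α)/α)`, `s̲₁ = sup_{α∈[0,1)} (−e(α)/(1−α))`.
Then `İ` is strictly decreasing and continuous on `(−s̲₁, s̲₀)` and maps it bijectively
onto `(0, s̲₁)`, with inverse the restriction of `g`; in particular
`f(İ(s)) = İ(s) + s` on `(−s̲₁, s̲₀)`.  Moreover if `s̲₀ < +∞` then `g(0) = s̲₀` and
`İ(s̲₀) = 0`, and if `s̲₁ < +∞` then `g(s̲₁) = −s̲₁` and `İ(−s̲₁) = s̲₁`. -/
theorem hoeffding_function_inverts_rate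
    (e : ℝ → EReal)
    (hproper : ∀ α : ℝ, e α ≠ ⊥)
    (hconv : ∀ x y p q : ℝ, 0 ≤ p → 0 ≤ q → p + q = 1 →
      e (p * x + q * y) ≤ (p : EReal) * e x + (q : EReal) * e y)
    (hlsc : LowerSemicontinuous e)
    (he0 : e 0 = 0) (he1 : e 1 = 0)
    (Ifun : ℝ → EReal)
    (hIfun : ∀ s : ℝ, Ifun s = ⨆ α : ℝ, ((-α * s : ℝ) : EReal) - e α)
    (f : ℝ → EReal)
    (hf : ∀ u : ℝ, f u = ⨆ α ∈ Set.Ioc (0 : ℝ) 1,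
        ((α⁻¹ : ℝ) : EReal) * (((-(1 - α) * u : ℝ) : EReal) - e α))
    (g : ℝ → EReal) (hg : ∀ u : ℝ, g u = f u - (u : EReal))
    (s0 s1 : EReal)
    (hs0 : s0 = ⨆ α ∈ Set.Ioc (0 : ℝ) 1, (-(e α)) * ((α⁻¹ : ℝ) : EReal))
    (hs1 : s1 = ⨆ α ∈ Set.Ico (0 : ℝ) 1, (-(e α)) * (((1 - α)⁻¹ : ℝ) : EReal))
    (A : Set ℝ) (hA : A = {s : ℝ | -s1 < (s : EReal) ∧ (s : EReal) < s0}) :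
    StrictAntiOn Ifun A
    ∧ ContinuousOn Ifun A
    ∧ Ifun '' A = {y : EReal | 0 < y ∧ y < s1}
    ∧ (∀ s ∈ A, ∀ u : ℝ, Ifun s = (u : EReal) →
        g u = (s : EReal) ∧ f u = Ifun s + (s : EReal))
    ∧ (∀ u0 : ℝ, s0 = (u0 : EReal) → g 0 = s0 ∧ Ifun u0 = 0)
    ∧ (∀ u1 : ℝ, s1 = (u1 : EReal) → g u1 = -s1 ∧ Ifun (-u1) = s1) := by
  subst hA
  have hle0 : ∀ α ∈ Set.Icc (0:ℝ) 1, e α ≤ 0 := by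
    intro α hα
    have h := hconv 0 1 (1-α) α (by linarith [hα.2]) hα.1 (by ring)
    rw [show (1-α) * 0 + α * 1 = α from by ring, he0, he1] at h
    simpa using h
  have hreal : ∀ γ ∈ Set.Icc (0:ℝ) 1, e γ = (((e γ).toReal : ℝ) : EReal) := fun γ hγ =>
    (EReal.coe_toReal ((lt_of_le_of_lt (hle0 γ hγ) (by norm_num : (0:EReal) < ⊤)).ne)
      (hproper γ)).symm
  have hterm : ∀ s α : ℝ, ((-α * s : ℝ) : EReal) - e α ≤ Ifun s := by
    intro s α; rw [hIfun s]; exact le_iSup (fun α : ℝ => ((-α * s : ℝ) : EReal) - e α) α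
  have hI0 : ∀ s : ℝ, (0:EReal) ≤ Ifun s := by
    intro s
    have h := hterm s 0
    rw [he0] at h
    simpa using h
  have hIneg : ∀ s : ℝ, ((-s : ℝ) : EReal) ≤ Ifun s := by
    intro s
    have h := hterm s 1
    rw [he1] at h
    simpa using h
  have hs0le : ∀ α : ℝ, α ∈ Set.Ioc (0:ℝ) 1 → (-(e α)) * ((α⁻¹ : ℝ) : EReal) ≤ s0 := by
    intro α hα
    rw [hs0]
    exact le_iSup₂ (f := fun (α:ℝ) (_ : α ∈ Set.Ioc (0:ℝ) 1) => (-(e α)) * ((α⁻¹ : ℝ) : EReal)) α hα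
  have hs1le : ∀ α : ℝ, α ∈ Set.Ico (0:ℝ) 1 → (-(e α)) * (((1-α)⁻¹ : ℝ) : EReal) ≤ s1 := by
    intro α hα
    rw [hs1]
    exact le_iSup₂ (f := fun (α:ℝ) (_ : α ∈ Set.Ico (0:ℝ) 1) => (-(e α)) * (((1-α)⁻¹ : ℝ) : EReal)) α hα
  have hs0nonneg : (0:EReal) ≤ s0 := by
    refine le_trans (le_of_eq ?_) (hs0le 1 (by norm_num))
    rw [he1]; simp
  have hs1nonneg : (0:EReal) ≤ s1 := by
    refine le_trans (le_of_eq ?_) (hs1le 0 (by norm_num))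
    rw [he0]; simp
  have hwit0 : ∀ s : ℝ, (s:EReal) < s0 →
      ∃ α₀, α₀ ∈ Set.Ioc (0:ℝ) 1 ∧ (e α₀).toReal + s * α₀ < 0 := by
    intro s hs
    rw [hs0] at hs
    obtain ⟨α, hα, hlt⟩ : ∃ α ∈ Set.Ioc (0:ℝ) 1, (s:EReal) < (-(e α)) * ((α⁻¹:ℝ):EReal) := by
      simpa [lt_iSup_iff] using hs
    refine ⟨α, hα, ?_⟩
    have hαIcc : α ∈ Set.Icc (0:ℝ) 1 := ⟨hα.1.le, hα.2⟩
    rw [hreal α hαIcc] at hlt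
    rw [show -((((e α).toReal):ℝ):EReal) * ((α⁻¹:ℝ):EReal) = ((-(e α).toReal * α⁻¹ : ℝ):EReal)
      from by norm_cast] at hlt
    have hlt' : s < -(e α).toReal * α⁻¹ := by exact_mod_cast hlt
    have h2 := mul_lt_mul_of_pos_right hlt' hα.1
    rw [mul_assoc, inv_mul_cancel₀ (ne_of_gt hα.1), mul_one] at h2
    linarith
  have hwit1 : ∀ s : ℝ, -s1 < (s:EReal) →
      ∃ α₁, α₁ ∈ Set.Ico (0:ℝ) 1 ∧ (e α₁).toReal + s * α₁ < s := by
    intro s hs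
    rw [EReal.neg_lt_comm] at hs
    rw [hs1, ← EReal.coe_neg] at hs
    obtain ⟨α, hα, hlt⟩ : ∃ α ∈ Set.Ico (0:ℝ) 1, ((-s:ℝ):EReal) < (-(e α)) * (((1-α)⁻¹:ℝ):EReal) := by
      simpa [lt_iSup_iff] using hs
    refine ⟨α, hα, ?_⟩
    have hαIcc : α ∈ Set.Icc (0:ℝ) 1 := ⟨hα.1, hα.2.le⟩
    rw [hreal α hαIcc] at hlt
    rw [show -((((e α).toReal):ℝ):EReal) * (((1-α)⁻¹:ℝ):EReal) = ((-(e α).toReal * (1-α)⁻¹ : ℝ):EReal)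
      from by norm_cast] at hlt
    have hlt' : -s < -(e α).toReal * (1-α)⁻¹ := by exact_mod_cast hlt
    have h1α : (0:ℝ) < 1 - α := by linarith [hα.2]
    have h2 := mul_lt_mul_of_pos_right hlt' h1α
    rw [mul_assoc, inv_mul_cancel₀ (ne_of_gt h1α), mul_one] at h2
    nlinarith
  have hkey : ∀ s : ℝ, -s1 < (s:EReal) → (s:EReal) < s0 →
      ∃ β, β ∈ Set.Ioc (0:ℝ) 1 ∧ (e β).toReal + s * β < 0 ∧
      (∀ γ ∈ Set.Icc (0:ℝ) 1, (e β).toReal + s * β ≤ (e γ).toReal + s * γ) ∧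
      Ifun s = ((-((e β).toReal + s * β) : ℝ) : EReal) := by
    intro s h1 h2
    obtain ⟨α₀, hα₀, h₀⟩ := hwit0 s h2
    obtain ⟨α₁, hα₁, h₁'⟩ := hwit1 s h1
    obtain ⟨β, hβ, hneg, hmin, heq⟩ :=
      hoeff_key e hproper hconv hlsc he0 he1 hle0 s α₀ hα₀ h₀ α₁ hα₁ h₁'
    exact ⟨β, hβ, hneg, hmin, by rw [hIfun s]; exact heq⟩
  have hanti : StrictAntiOn Ifun {s : ℝ | -s1 < (s:EReal) ∧ (s:EReal) < s0} := by
    intro s hs s' hs' hlt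
    obtain ⟨β, hβ, hneg, hmin, heq⟩ := hkey s' hs'.1 hs'.2
    have h2 : ((-β * s - (e β).toReal : ℝ) : EReal) ≤ Ifun s := by
      have h3 := hterm s β
      rwa [hreal β ⟨hβ.1.le, hβ.2⟩, show ((-β * s : ℝ):EReal) - (((e β).toReal:ℝ):EReal)
        = ((-β * s - (e β).toReal : ℝ):EReal) from by norm_cast] at h3
    rw [heq]
    refine lt_of_lt_of_le ?_ h2
    rw [EReal.coe_lt_coe_iff]
    nlinarith [mul_pos hβ.1 (sub_pos.mpr hlt)]
  set Ir : ℝ → ℝ := fun s => (Ifun s).toReal with hIr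
  have hIcoe : ∀ s : ℝ, -s1 < (s:EReal) → (s:EReal) < s0 → Ifun s = ((Ir s : ℝ) : EReal) := by
    intro s h1 h2
    obtain ⟨β, hβ, hneg, hmin, heq⟩ := hkey s h1 h2
    have h3 : Ir s = -((e β).toReal + s * β) := by
      show (Ifun s).toReal = _
      rw [heq, EReal.toReal_coe]
    rw [heq, h3]
  have hchord : ∀ s t p q us ut : ℝ, 0 ≤ p → 0 ≤ q → p + q = 1 →
      Ifun s ≤ (us:EReal) → Ifun t ≤ (ut:EReal) →
      Ifun (p*s + q*t) ≤ ((p*us + q*ut : ℝ):EReal) := by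
    intro s t p q us ut hp hq hpq hus hut
    rw [hIfun]
    refine iSup_le fun α => ?_
    by_cases htop : e α = ⊤
    · simp [htop]
    · have hr : e α = (((e α).toReal : ℝ):EReal) := (EReal.coe_toReal htop (hproper α)).symm
      have h1 : -α * s - (e α).toReal ≤ us := by
        have h3 := le_trans (hterm s α) hus
        rwa [hr, show ((-α*s:ℝ):EReal) - (((e α).toReal:ℝ):EReal)
          = ((-α*s - (e α).toReal:ℝ):EReal) from by norm_cast, EReal.coe_le_coe_iff] at h3
      have h2 : -α * t - (e α).toReal ≤ ut := by
        have h3 := le_trans (hterm t α) hut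
        rwa [hr, show ((-α*t:ℝ):EReal) - (((e α).toReal:ℝ):EReal)
          = ((-α*t - (e α).toReal:ℝ):EReal) from by norm_cast, EReal.coe_le_coe_iff] at h3
      rw [hr, show ((-α*(p*s+q*t):ℝ):EReal) - (((e α).toReal:ℝ):EReal)
        = ((-α*(p*s+q*t) - (e α).toReal:ℝ):EReal) from by norm_cast, EReal.coe_le_coe_iff]
      have hr1 : p*(e α).toReal + q*(e α).toReal = (e α).toReal := by
        rw [← add_mul, hpq, one_mul]
      nlinarith [mul_le_mul_of_nonneg_left h1 hp, mul_le_mul_of_nonneg_left h2 hq]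
  have hAconv : Convex ℝ {s : ℝ | -s1 < (s:EReal) ∧ (s:EReal) < s0} := by
    intro x hx y hy p q hp hq hpq
    simp only [Set.mem_setOf_eq, smul_eq_mul]
    have hxx : p*x + q*x = x := by rw [← add_mul, hpq, one_mul]
    have hyy : p*y + q*y = y := by rw [← add_mul, hpq, one_mul]
    constructor
    · rcases le_total x y with h | h
      · refine lt_of_lt_of_le hx.1 (EReal.coe_le_coe_iff.mpr ?_)
        nlinarith [mul_nonneg hq (sub_nonneg.mpr h), hxx]
      · refine lt_of_lt_of_le hy.1 (EReal.coe_le_coe_iff.mpr ?_)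
        nlinarith [mul_nonneg hp (sub_nonneg.mpr h), hyy]
    · rcases le_total x y with h | h
      · refine lt_of_le_of_lt (EReal.coe_le_coe_iff.mpr ?_) hy.2
        nlinarith [mul_nonneg hp (sub_nonneg.mpr h), hyy]
      · refine lt_of_le_of_lt (EReal.coe_le_coe_iff.mpr ?_) hx.2
        nlinarith [mul_nonneg hq (sub_nonneg.mpr h), hxx]
  have hAopen : IsOpen {s : ℝ | -s1 < (s:EReal) ∧ (s:EReal) < s0} := by
    have h : {s : ℝ | -s1 < (s:EReal) ∧ (s:EReal) < s0}
        = (fun s:ℝ => (s:EReal)) ⁻¹' (Set.Ioo (-s1) s0) := rfl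
    rw [h]
    exact isOpen_Ioo.preimage continuous_coe_real_ereal
  have hIrcv : ConvexOn ℝ {s : ℝ | -s1 < (s:EReal) ∧ (s:EReal) < s0} Ir := by
    refine ⟨hAconv, fun x hx y hy p q hp hq hpq => ?_⟩
    simp only [smul_eq_mul]
    have hxy : p*x + q*y ∈ {s : ℝ | -s1 < (s:EReal) ∧ (s:EReal) < s0} := by
      have := hAconv hx hy hp hq hpq
      simpa using this
    have h := hchord x y p q (Ir x) (Ir y) hp hq hpq
      (le_of_eq (hIcoe x hx.1 hx.2)) (le_of_eq (hIcoe y hy.1 hy.2))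
    rw [hIcoe _ hxy.1 hxy.2] at h
    exact_mod_cast h
  have hcont : ContinuousOn Ifun {s : ℝ | -s1 < (s:EReal) ∧ (s:EReal) < s0} :=
    (continuous_coe_real_ereal.comp_continuousOn
      (hIrcv.continuousOn hAopen)).congr (fun s hs => hIcoe s hs.1 hs.2)
  have himle : ∀ s : ℝ, -s1 < (s:EReal) → (s:EReal) < s0 → 0 < Ifun s ∧ Ifun s < s1 := by
    intro s h1 h2
    obtain ⟨β, hβ, hneg, hmin, heq⟩ := hkey s h1 h2
    have hupos : (0:ℝ) < -((e β).toReal + s * β) := by linarith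
    constructor
    · rw [heq]; exact_mod_cast hupos
    · obtain ⟨α₁, hα₁, h₁'⟩ := hwit1 s h1
      have husum : (0:ℝ) < -((e β).toReal + s * β) + s := by
        have := hmin α₁ ⟨hα₁.1, hα₁.2.le⟩
        linarith
      rcases lt_or_eq_of_le hβ.2 with hβ1 | hβ1
      · have hs1β := hs1le β ⟨hβ.1.le, hβ1⟩
        rw [hreal β ⟨hβ.1.le, hβ.2⟩, show -((((e β).toReal):ℝ):EReal) * (((1-β)⁻¹:ℝ):EReal)
          = ((-(e β).toReal * (1-β)⁻¹ : ℝ):EReal) from by norm_cast] at hs1β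
        refine lt_of_lt_of_le ?_ hs1β
        rw [heq, EReal.coe_lt_coe_iff]
        have h1β : (0:ℝ) < 1 - β := by linarith
        rw [show -(e β).toReal * (1-β)⁻¹ = -(e β).toReal / (1-β) from by ring, lt_div_iff₀ h1β]
        nlinarith [mul_pos hβ.1 husum]
      · have her1 : (e 1).toReal = 0 := by rw [he1]; simp
        rw [hβ1] at heq
        rw [her1] at heq
        have heq' : Ifun s = ((-s : ℝ) : EReal) := by rw [heq]; norm_num
        rw [heq', EReal.coe_neg]
        exact EReal.neg_lt_comm.mpr h1
  have hs01 : (0:EReal) < s1 → (0:EReal) < s0 := by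
    intro hpos
    rw [hs1] at hpos
    obtain ⟨α, hα, hlt⟩ : ∃ α ∈ Set.Ico (0:ℝ) 1, (0:EReal) < (-(e α)) * (((1-α)⁻¹:ℝ):EReal) := by
      simpa [lt_iSup_iff] using hpos
    have hαIcc : α ∈ Set.Icc (0:ℝ) 1 := ⟨hα.1, hα.2.le⟩
    rw [hreal α hαIcc, show -((((e α).toReal):ℝ):EReal) * (((1-α)⁻¹:ℝ):EReal)
      = ((-(e α).toReal * (1-α)⁻¹ : ℝ):EReal) from by norm_cast] at hlt
    have hlt' : (0:ℝ) < -(e α).toReal * (1-α)⁻¹ := by exact_mod_cast hlt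
    have h1α : (0:ℝ) < 1 - α := by linarith [hα.2]
    have hrneg : (e α).toReal < 0 := by nlinarith [inv_pos.mpr h1α]
    have hαpos : (0:ℝ) < α := by
      rcases hα.1.lt_or_eq with h | h
      · exact h
      · exfalso; rw [← h, he0] at hrneg; simp at hrneg
    refine lt_of_lt_of_le ?_ (hs0le α ⟨hαpos, hα.2.le⟩)
    rw [hreal α hαIcc, show -((((e α).toReal):ℝ):EReal) * ((α⁻¹:ℝ):EReal)
      = ((-(e α).toReal * α⁻¹ : ℝ):EReal) from by norm_cast]
    exact_mod_cast mul_pos (by linarith : (0:ℝ) < -(e α).toReal) (inv_pos.mpr hαpos)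
  have hIs0 : ∀ u0 : ℝ, s0 = (u0:EReal) → Ifun u0 = 0 := by
    intro u0 hu0
    have hu0nonneg : (0:ℝ) ≤ u0 := by
      have h := hs0nonneg; rw [hu0] at h; exact_mod_cast h
    refine le_antisymm ?_ (hI0 u0)
    rw [hIfun]
    refine iSup_le fun α => ?_
    by_cases htop : e α = ⊤
    · simp [htop]
    · have hr : e α = (((e α).toReal : ℝ):EReal) := (EReal.coe_toReal htop (hproper α)).symm
      rw [hr, show ((-α*u0:ℝ):EReal) - (((e α).toReal:ℝ):EReal)
        = ((-α*u0 - (e α).toReal:ℝ):EReal) from by norm_cast]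
      have key : -α * u0 - (e α).toReal ≤ 0 := by
        rcases le_or_gt 0 α with hα0 | hα0
        · rcases le_or_gt α 1 with hα1 | hα1
          · rcases hα0.lt_or_eq with hαpos | hαz
            · have h := hs0le α ⟨hαpos, hα1⟩
              rw [hu0, hr, show -((((e α).toReal):ℝ):EReal) * ((α⁻¹:ℝ):EReal)
                = ((-(e α).toReal * α⁻¹ : ℝ):EReal) from by norm_cast,
                EReal.coe_le_coe_iff] at h
              have h2 := mul_le_mul_of_nonneg_right h hαpos.le
              rw [mul_assoc, inv_mul_cancel₀ (ne_of_gt hαpos), mul_one] at h2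
              linarith
            · have hz : (e α).toReal = 0 := by rw [← hαz, he0]; simp
              rw [hz, ← hαz]; norm_num
          · have hα1inv : α⁻¹ < 1 := by
              rw [inv_lt_one_iff₀]; right; exact hα1
            have hcomb := hconv 0 α (1 - α⁻¹) α⁻¹ (by linarith)
              (by positivity) (by ring)
            rw [show (1 - α⁻¹) * 0 + α⁻¹ * α = 1 from by field_simp; ring, he1, he0, hr] at hcomb
            rw [mul_zero, zero_add, show ((α⁻¹:ℝ):EReal) * (((e α).toReal:ℝ):EReal)
              = ((α⁻¹ * (e α).toReal:ℝ):EReal) from by norm_cast] at hcomb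
            have hcomb' : (0:ℝ) ≤ α⁻¹ * (e α).toReal := by exact_mod_cast hcomb
            have hrnn : (0:ℝ) ≤ (e α).toReal := by nlinarith [inv_pos.mpr (by linarith : (0:ℝ) < α)]
            nlinarith [mul_nonneg (by linarith : (0:ℝ) ≤ α) hu0nonneg]
        · have hbnd : s0 ≤ (((e α).toReal / (-α) : ℝ) : EReal) := by
            rw [hs0]
            refine iSup₂_le fun β hβ => ?_
            have hβIcc : β ∈ Set.Icc (0:ℝ) 1 := ⟨hβ.1.le, hβ.2⟩
            rw [hreal β hβIcc, show -((((e β).toReal):ℝ):EReal) * ((β⁻¹:ℝ):EReal)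
              = ((-(e β).toReal * β⁻¹ : ℝ):EReal) from by norm_cast, EReal.coe_le_coe_iff]
            have hd : (0:ℝ) < β - α := by linarith [hβ.1]
            have hp : (0:ℝ) ≤ β/(β-α) := div_nonneg hβ.1.le hd.le
            have hq : (0:ℝ) ≤ -α/(β-α) := div_nonneg (by linarith) hd.le
            have hpq : β/(β-α) + -α/(β-α) = 1 := by field_simp; try ring
            have hcomb := hconv α β (β/(β-α)) (-α/(β-α)) hp hq hpq
            rw [show β/(β-α) * α + -α/(β-α) * β = 0 from by field_simp; try ring, he0, hr,
              hreal β hβIcc] at hcomb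
            rw [show ((β/(β-α):ℝ):EReal) * (((e α).toReal:ℝ):EReal)
                + ((-α/(β-α):ℝ):EReal) * (((e β).toReal:ℝ):EReal)
              = ((β/(β-α) * (e α).toReal + -α/(β-α) * (e β).toReal :ℝ):EReal)
              from by norm_cast] at hcomb
            have hcomb' : (0:ℝ) ≤ β/(β-α) * (e α).toReal + -α/(β-α) * (e β).toReal := by
              exact_mod_cast hcomb
            have h6 : 0 ≤ β * (e α).toReal - α * (e β).toReal := by
              have h5 : (β/(β-α) * (e α).toReal + -α/(β-α) * (e β).toReal) * (β - α)
                  = β * (e α).toReal - α * (e β).toReal := by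
                field_simp; try ring
              rw [← h5]; exact mul_nonneg hcomb' hd.le
            rw [show -(e β).toReal * β⁻¹ = -(e β).toReal / β from by ring,
              div_le_div_iff₀ hβ.1 (by linarith : (0:ℝ) < -α)]
            nlinarith
          rw [hu0] at hbnd
          have h8 : u0 ≤ (e α).toReal / (-α) := by exact_mod_cast hbnd
          have h7 := mul_le_mul_of_nonneg_right h8 (by linarith : (0:ℝ) ≤ -α)
          rw [div_mul_cancel₀ _ (by linarith : (-α) ≠ 0)] at h7
          linarith
      exact_mod_cast key
  have himage : Ifun '' {s : ℝ | -s1 < (s:EReal) ∧ (s:EReal) < s0}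
      = {y : EReal | 0 < y ∧ y < s1} := by
    refine Set.Subset.antisymm ?_ ?_
    · rintro y ⟨s, hs, rfl⟩
      exact ⟨(himle s hs.1 hs.2).1, (himle s hs.1 hs.2).2⟩
    · rintro y ⟨hy1, hy2⟩
      have hytop : y ≠ ⊤ := (lt_of_lt_of_le hy2 le_top).ne
      have hybot : y ≠ ⊥ := by
        intro h; rw [h] at hy1; exact absurd hy1 (by simp)
      have hyrepr : y = ((y.toReal : ℝ) : EReal) := (EReal.coe_toReal hytop hybot).symm
      set yr : ℝ := y.toReal with hyrdef
      have hyrpos : (0:ℝ) < yr := by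
        rw [hyrepr] at hy1; exact_mod_cast hy1
      have hs1pos : (0:EReal) < s1 := lt_trans hy1 hy2
      have hs0pos : (0:EReal) < s0 := hs01 hs1pos
      have hnegs1 : -s1 < (0:EReal) := EReal.neg_lt_comm.mpr (by simpa using hs1pos)
      have hsbA1 : -s1 < ((-yr : ℝ):EReal) := by
        rw [EReal.coe_neg]
        refine EReal.neg_lt_comm.mpr ?_
        rw [neg_neg]
        rwa [hyrepr] at hy2
      have hsbA2 : ((-yr : ℝ):EReal) < s0 := by
        refine lt_trans ?_ hs0pos
        exact_mod_cast (by linarith : -yr < (0:ℝ))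
      have hbmem : Ifun (-yr) ∈ Ifun '' {s : ℝ | -s1 < (s:EReal) ∧ (s:EReal) < s0} :=
        ⟨-yr, ⟨hsbA1, hsbA2⟩, rfl⟩
      have hyb : y ≤ Ifun (-yr) := by
        have h := hIneg (-yr)
        rw [neg_neg] at h
        rwa [← hyrepr] at h
      have hamem : ∃ sa : ℝ, (-s1 < (sa:EReal) ∧ (sa:EReal) < s0) ∧ Ifun sa ≤ y := by
        by_cases hs0top : s0 = ⊤
        · have h0lt : ((-yr : ℝ):EReal) < e 0 := by
            rw [he0]; exact_mod_cast (by linarith : -yr < (0:ℝ))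
          have hev := hlsc 0 _ h0lt
          rw [Metric.eventually_nhds_iff] at hev
          obtain ⟨δ, hδpos, hδ⟩ := hev
          obtain ⟨γ, hγIcc, hγmin⟩ := hoeff_lscMin (hoeff_psiLsc e hproper hlsc 0) isCompact_Icc
            (⟨0, by norm_num⟩ : (Set.Icc (0:ℝ) 1).Nonempty)
          have hlb : ∀ β ∈ Set.Icc (0:ℝ) 1, (e γ).toReal ≤ (e β).toReal := by
            intro β hβ
            have h := hγmin β hβ
            rw [hreal γ hγIcc, hreal β hβ] at h
            have h' : (e γ).toReal + 0 * γ ≤ (e β).toReal + 0 * β := by exact_mod_cast h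
            linarith
          set M : ℝ := -(e γ).toReal with hM
          set δ' : ℝ := min δ 1 with hδ'
          have hδ'pos : (0:ℝ) < δ' := lt_min hδpos one_pos
          set sa : ℝ := max 1 ((M - yr) / δ') with hsadef
          have hsapos : (0:ℝ) < sa := lt_of_lt_of_le one_pos (le_max_left _ _)
          have hsaA1 : -s1 < (sa:EReal) := lt_trans hnegs1 (by exact_mod_cast hsapos)
          have hsaA2 : (sa:EReal) < s0 := by rw [hs0top]; exact EReal.coe_lt_top sa
          refine ⟨sa, ⟨hsaA1, hsaA2⟩, ?_⟩
          obtain ⟨β, hβ, hneg, hmin, heq⟩ := hkey sa hsaA1 hsaA2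
          rw [heq, hyrepr, EReal.coe_le_coe_iff]
          rcases lt_or_ge β δ' with hcase | hcase
          · have hβδ : dist β 0 < δ := by
              rw [Real.dist_eq, sub_zero, abs_of_nonneg hβ.1.le]
              exact lt_of_lt_of_le hcase (min_le_left _ _)
            have h : ((-yr : ℝ):EReal) < e β := hδ hβδ
            rw [hreal β ⟨hβ.1.le, hβ.2⟩] at h
            have h' : -yr < (e β).toReal := by exact_mod_cast h
            nlinarith [mul_pos hsapos hβ.1]
          · have h1 := hlb β ⟨hβ.1.le, hβ.2⟩
            have h2 : (M - yr)/δ' ≤ sa := le_max_right _ _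
            have h3 : M - yr ≤ sa * δ' := by
              rw [div_le_iff₀ hδ'pos] at h2; linarith
            have h4 : sa * δ' ≤ sa * β := mul_le_mul_of_nonneg_left hcase hsapos.le
            have h5 : -M ≤ (e β).toReal := by rw [hM]; linarith
            linarith
        · have hs0bot : s0 ≠ ⊥ := (lt_of_lt_of_le (EReal.bot_lt_coe 0) hs0nonneg).ne'
          have hw : s0 = ((s0.toReal : ℝ):EReal) := (EReal.coe_toReal hs0top hs0bot).symm
          set w : ℝ := s0.toReal with hwdef
          have hIw : Ifun w = 0 := hIs0 w hw
          have hwpos : (0:ℝ) < w := by rw [hw] at hs0pos; exact_mod_cast hs0pos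
          have h0A1 : -s1 < ((0:ℝ):EReal) := hnegs1
          have h0A2 : ((0:ℝ):EReal) < s0 := hs0pos
          have hu0 := hIcoe 0 h0A1 h0A2
          have hu0pos : (0:ℝ) < Ir 0 := by
            have h := (himle 0 h0A1 h0A2).1
            rw [hu0] at h; exact_mod_cast h
          set tt : ℝ := yr / (Ir 0 + yr) with httdef
          have httpos : (0:ℝ) < tt := div_pos hyrpos (by linarith)
          have httlt : tt < 1 := by rw [httdef, div_lt_one (by linarith)]; linarith
          have hchord' := hchord w 0 (1-tt) tt 0 (Ir 0) (by linarith) httpos.le (by ring)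
            (le_of_eq hIw) (le_of_eq hu0)
          have hsapos : (0:ℝ) < (1-tt)*w + tt*0 := by nlinarith
          have hsalt : (1-tt)*w + tt*0 < w := by nlinarith
          have hsa1 : -s1 < (((1-tt)*w + tt*0 : ℝ):EReal) :=
            lt_trans hnegs1 (by exact_mod_cast hsapos)
          have hsa2 : (((1-tt)*w + tt*0 : ℝ):EReal) < s0 := by
            rw [hw]; exact_mod_cast hsalt
          refine ⟨(1-tt)*w + tt*0, ⟨hsa1, hsa2⟩, ?_⟩
          refine le_trans hchord' ?_
          rw [hyrepr, EReal.coe_le_coe_iff]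
          rw [show (1-tt)*0 + tt*Ir 0 = tt * Ir 0 from by ring, httdef,
            div_mul_eq_mul_div, div_le_iff₀ (by linarith : (0:ℝ) < Ir 0 + yr)]
          nlinarith
      obtain ⟨sa, hsaA, hsale⟩ := hamem
      have hT : Set.OrdConnected (Ifun '' {s : ℝ | -s1 < (s:EReal) ∧ (s:EReal) < s0}) :=
        ((hAconv.isPreconnected).image Ifun hcont).ordConnected
      exact hT.out ⟨sa, hsaA, rfl⟩ hbmem ⟨hsale, hyb⟩
  have hconj4 : ∀ s ∈ {s : ℝ | -s1 < (s:EReal) ∧ (s:EReal) < s0}, ∀ u : ℝ,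
      Ifun s = (u : EReal) → g u = (s : EReal) ∧ f u = Ifun s + (s : EReal) := by
    intro s hs u hu
    obtain ⟨β, hβ, hneg, hmin, heq⟩ := hkey s hs.1 hs.2
    have huval : -((e β).toReal + s * β) = u := by exact_mod_cast heq.symm.trans hu
    have herβ : (e β).toReal = -u - s*β := by linarith
    have hfu : f u = ((s + u : ℝ) : EReal) := by
      rw [hf]
      refine le_antisymm (iSup₂_le fun α hα => ?_) ?_
      · have hαIcc : α ∈ Set.Icc (0:ℝ) 1 := ⟨hα.1.le, hα.2⟩
        rw [hreal α hαIcc, show ((α⁻¹:ℝ):EReal) * (((-(1-α)*u:ℝ):EReal) - (((e α).toReal:ℝ):EReal))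
          = ((α⁻¹ * (-(1-α)*u - (e α).toReal) : ℝ):EReal) from by norm_cast, EReal.coe_le_coe_iff]
        have hψ := hmin α hαIcc
        have hαpos := hα.1
        have h9 : -(1-α)*u - (e α).toReal ≤ α * (s + u) := by nlinarith
        calc α⁻¹ * (-(1-α)*u - (e α).toReal) ≤ α⁻¹ * (α * (s+u)) :=
              mul_le_mul_of_nonneg_left h9 (inv_nonneg.mpr hαpos.le)
          _ = s + u := by field_simp
      · refine le_trans (le_of_eq ?_) (le_iSup₂ (f := fun (α:ℝ) (_ : α ∈ Set.Ioc (0:ℝ) 1) =>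
          ((α⁻¹ : ℝ) : EReal) * (((-(1 - α) * u : ℝ) : EReal) - e α)) β hβ)
        rw [hreal β ⟨hβ.1.le, hβ.2⟩, show ((β⁻¹:ℝ):EReal) * (((-(1-β)*u:ℝ):EReal)
          - (((e β).toReal:ℝ):EReal))
          = ((β⁻¹ * (-(1-β)*u - (e β).toReal) : ℝ):EReal) from by norm_cast]
        have hq : β⁻¹ * (-(1-β)*u - (e β).toReal) = s + u := by
          have hβ0 : β ≠ 0 := ne_of_gt hβ.1
          rw [herβ]; field_simp; try ring
        rw [hq]
    refine ⟨?_, ?_⟩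
    · rw [hg, hfu, show ((s+u:ℝ):EReal) - ((u:ℝ):EReal) = ((s+u-u:ℝ):EReal) from by norm_cast]
      norm_num
    · rw [hfu, hu]
      exact_mod_cast (show s + u = u + s from by ring)
  have hconj5 : ∀ u0 : ℝ, s0 = (u0 : EReal) → g 0 = s0 ∧ Ifun u0 = 0 := by
    intro u0 hu0
    refine ⟨?_, hIs0 u0 hu0⟩
    have hf0 : f 0 = s0 := by
      rw [hf 0, hs0]
      refine iSup_congr fun α => iSup_congr fun hα => ?_
      rw [show (-(1 - α) * (0:ℝ) : ℝ) = (0:ℝ) from by ring]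
      rw [show (((0:ℝ)):EReal) = (0:EReal) from rfl, zero_sub, mul_comm]
    rw [hg 0, hf0]
    simp
  have hconj6 : ∀ u1 : ℝ, s1 = (u1 : EReal) → g u1 = -s1 ∧ Ifun (-u1) = s1 := by
    intro u1 hu1
    have hu1nonneg : (0:ℝ) ≤ u1 := by
      have h := hs1nonneg; rw [hu1] at h; exact_mod_cast h
    have herm : ∀ α : ℝ, α ∈ Set.Ico (0:ℝ) 1 → -(e α).toReal ≤ u1 * (1 - α) := by
      intro α hα
      have h := hs1le α hα
      rw [hu1, hreal α ⟨hα.1, hα.2.le⟩, show -((((e α).toReal):ℝ):EReal) * (((1-α)⁻¹:ℝ):EReal)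
        = ((-(e α).toReal * (1-α)⁻¹ : ℝ):EReal) from by norm_cast, EReal.coe_le_coe_iff] at h
      have h1α : (0:ℝ) < 1 - α := by linarith [hα.2]
      have h2 := mul_le_mul_of_nonneg_right h h1α.le
      rwa [mul_assoc, inv_mul_cancel₀ (ne_of_gt h1α), mul_one] at h2
    have her1 : (e 1).toReal = 0 := by rw [he1]; simp
    have hfu1 : f u1 = 0 := by
      rw [hf]
      refine le_antisymm (iSup₂_le fun α hα => ?_) ?_
      · have hαIcc : α ∈ Set.Icc (0:ℝ) 1 := ⟨hα.1.le, hα.2⟩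
        rw [hreal α hαIcc, show ((α⁻¹:ℝ):EReal) * (((-(1-α)*u1:ℝ):EReal) - (((e α).toReal:ℝ):EReal))
          = ((α⁻¹ * (-(1-α)*u1 - (e α).toReal) : ℝ):EReal) from by norm_cast]
        have hnonpos : α⁻¹ * (-(1-α)*u1 - (e α).toReal) ≤ 0 := by
          rcases lt_or_eq_of_le hα.2 with hα1 | hα1
          · have h := herm α ⟨hα.1.le, hα1⟩
            have : -(1-α)*u1 - (e α).toReal ≤ 0 := by nlinarith
            exact mul_nonpos_of_nonneg_of_nonpos (inv_nonneg.mpr hα.1.le) this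
          · rw [hα1, her1]
            norm_num
        exact_mod_cast hnonpos
      · refine le_trans (le_of_eq ?_) (le_iSup₂ (f := fun (α:ℝ) (_ : α ∈ Set.Ioc (0:ℝ) 1) =>
          ((α⁻¹ : ℝ) : EReal) * (((-(1 - α) * u1 : ℝ) : EReal) - e α)) 1 (by norm_num))
        rw [he1]
        norm_num
    refine ⟨?_, ?_⟩
    · rw [hg, hfu1, hu1, zero_sub]
    · have hge : ((u1:ℝ):EReal) ≤ Ifun (-u1) := by
        have h := hterm (-u1) 1
        rw [he1, show (-1 * -u1 : ℝ) = u1 from by ring] at h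
        simpa using h
      refine le_antisymm ?_ (by rw [hu1]; exact hge)
      rw [hIfun, hu1]
      refine iSup_le fun α => ?_
      by_cases htop : e α = ⊤
      · simp [htop]
      · have hr : e α = (((e α).toReal : ℝ):EReal) := (EReal.coe_toReal htop (hproper α)).symm
        rw [hr, show ((-α*(-u1):ℝ):EReal) - (((e α).toReal:ℝ):EReal)
          = ((-α*(-u1) - (e α).toReal:ℝ):EReal) from by norm_cast, EReal.coe_le_coe_iff]
        have key : α * u1 - (e α).toReal ≤ u1 := by
          rcases le_or_gt 0 α with hα0 | hα0
          · rcases lt_or_ge α 1 with hα1 | hα1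
            · have h := herm α ⟨hα0, hα1⟩
              nlinarith
            · rcases lt_or_eq_of_le hα1 with hα1' | hα1'
              · -- α > 1 : sup argument
                have hbnd : s1 ≤ (((e α).toReal / (α - 1) : ℝ) : EReal) := by
                  rw [hs1]
                  refine iSup₂_le fun β hβ => ?_
                  have hβIcc : β ∈ Set.Icc (0:ℝ) 1 := ⟨hβ.1, hβ.2.le⟩
                  rw [hreal β hβIcc, show -((((e β).toReal):ℝ):EReal) * (((1-β)⁻¹:ℝ):EReal)
                    = ((-(e β).toReal * (1-β)⁻¹ : ℝ):EReal) from by norm_cast,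
                    EReal.coe_le_coe_iff]
                  have hd : (0:ℝ) < α - β := by linarith [hβ.2]
                  have hp : (0:ℝ) ≤ (α-1)/(α-β) := div_nonneg (by linarith) hd.le
                  have hq : (0:ℝ) ≤ (1-β)/(α-β) := div_nonneg (by linarith [hβ.2]) hd.le
                  have hpq : (α-1)/(α-β) + (1-β)/(α-β) = 1 := by field_simp; try ring
                  have hcomb := hconv β α ((α-1)/(α-β)) ((1-β)/(α-β)) hp hq hpq
                  rw [show (α-1)/(α-β) * β + (1-β)/(α-β) * α = 1 from by field_simp; try ring,
                    he1, hr, hreal β hβIcc] at hcomb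
                  rw [show (((α-1)/(α-β):ℝ):EReal) * (((e β).toReal:ℝ):EReal)
                      + (((1-β)/(α-β):ℝ):EReal) * (((e α).toReal:ℝ):EReal)
                    = (((α-1)/(α-β) * (e β).toReal + (1-β)/(α-β) * (e α).toReal :ℝ):EReal)
                    from by norm_cast] at hcomb
                  have hcomb' : (0:ℝ) ≤ (α-1)/(α-β) * (e β).toReal
                      + (1-β)/(α-β) * (e α).toReal := by exact_mod_cast hcomb
                  have h6 : 0 ≤ (α-1) * (e β).toReal + (1-β) * (e α).toReal := by
                    have h5 : ((α-1)/(α-β) * (e β).toReal + (1-β)/(α-β) * (e α).toReal) * (α - β)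
                        = (α-1) * (e β).toReal + (1-β) * (e α).toReal := by
                      field_simp; try ring
                    rw [← h5]; exact mul_nonneg hcomb' hd.le
                  rw [show -(e β).toReal * (1-β)⁻¹ = -(e β).toReal / (1-β) from by ring,
                    div_le_div_iff₀ (by linarith [hβ.2] : (0:ℝ) < 1 - β)
                      (by linarith : (0:ℝ) < α - 1)]
                  nlinarith
                rw [hu1] at hbnd
                have h8 : u1 ≤ (e α).toReal / (α - 1) := by exact_mod_cast hbnd
                have h7 := mul_le_mul_of_nonneg_right h8 (by linarith : (0:ℝ) ≤ α - 1)
                rw [div_mul_cancel₀ _ (by linarith : (α - 1) ≠ 0)] at h7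
                nlinarith
              · rw [← hα1', her1] at *
                rw [← hα1']
                norm_num
          · -- α < 0 : e α ≥ 0
            have hd : (0:ℝ) < 1 - α := by linarith
            have hp : (0:ℝ) ≤ 1/(1-α) := by positivity
            have hq : (0:ℝ) ≤ -α/(1-α) := div_nonneg (by linarith) hd.le
            have hpq : 1/(1-α) + -α/(1-α) = 1 := by field_simp; try ring
            have hcomb := hconv α 1 (1/(1-α)) (-α/(1-α)) hp hq hpq
            rw [show 1/(1-α) * α + -α/(1-α) * 1 = 0 from by field_simp; try ring,
              he0, he1, hr] at hcomb
            rw [mul_zero, add_zero, show ((1/(1-α):ℝ):EReal) * (((e α).toReal:ℝ):EReal)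
              = ((1/(1-α) * (e α).toReal:ℝ):EReal) from by norm_cast] at hcomb
            have hcomb' : (0:ℝ) ≤ 1/(1-α) * (e α).toReal := by exact_mod_cast hcomb
            have hrnn : (0:ℝ) ≤ (e α).toReal := by nlinarith [div_pos one_pos hd]
            nlinarith [mul_nonneg (by linarith : (0:ℝ) ≤ -α) hu1nonneg]
        nlinarith
  exact ⟨hanti, hcont, himage, hconj4, hconj5, hconj6⟩
end

section
/- Let (M,d) be a compact metric space, φ : M → M continuous, v : M → ℝ continuous, c ∈ ℝ, and let P be a Borel probability measure on M with full support (P(U) > 0 for every nonempty open U). For integers t ≥ 1 and ε > 0 write B_t(x,ε) := { y ∈ M : d(φ^s(x), φ^s(y)) < ε for all 0 ≤ s < t } for the Bowen ball, S_t v := Σ_{s=0}^{t−1} v∘φ^s, and γ_ε(v) := max{ |v(x) − v(y)| : x,y ∈ M, d(x,y) ≤ ε }. Suppose that for every t ≥ 1 and ε > 0 there is a constant K_t(ε) ≥ 1 with lim_{ε↓0} limsup_{t→∞} t^{−1} log K_t(ε) = 0, such that K_t(ε)^{−1} e^{S_t v(x) − tc} ≤ P(B_t(x,ε)) ≤ K_t(ε)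 e^{S_t v(x) − tc} holds for P-almost every x ∈ M. Then for every x ∈ M, every t ≥ 1 and every ε > 0, K′_t(ε)^{−1} e^{S_t v(x) − tc − tγ_ε(v)} ≤ P(B_t(x,ε)) ≤ K′_t(ε) e^{S_t v(x) − tc + tγ_ε(v)}, where K′_t(ε) := max(K_t(2ε), K_t(ε/2)); since lim_{ε↓0} γ_ε(v) = 0 by uniform continuity, the constants K′_t(ε)e^{tγ_ε(v)} again satisfy lim_{ε↓0} limsup_{t→∞} t^{−1} log(K′_t(ε)e^{tγ_ε(v)}) = 0, so P is a weak Gibbs measure for v. -/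
open MeasureTheory Filter
open scoped ENNReal Topology

/-- The Bowen ball `B_t(x, ε) = { y : d(φ^s x, φ^s y) < ε for all 0 ≤ s < t }`. -/
def bowenBall {M : Type*} [PseudoMetricSpace M] (φ : M → M) (t : ℕ) (ε : ℝ) (x : M) :
    Set M :=
  {y | ∀ s < t, dist (φ^[s] x) (φ^[s] y) < ε}

/-- The Birkhoff sum `S_t v = Σ_{s=0}^{t−1} v ∘ φ^s`. -/
def birkhoffSumOf {M : Type*} (φ : M → M) (v : M → ℝ) (t : ℕ) (x : M) : ℝ :=
  ∑ s ∈ Finset.range t, v (φ^[s] x)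

/-- The modulus of continuity `γ_ε(v) = max { |v(x) − v(y)| : d(x,y) ≤ ε }`. -/
noncomputable def oscModulus {M : Type*} [PseudoMetricSpace M] (v : M → ℝ) (ε : ℝ) : ℝ :=
  sSup {d : ℝ | ∃ x y : M, dist x y ≤ ε ∧ d = |v x - v y|}

lemma isOpen_bowenBall {M : Type*} [MetricSpace M] {φ : M → M} (hφ : Continuous φ)
    (t : ℕ) (ε : ℝ) (x : M) : IsOpen (bowenBall φ t ε x) := by
  have h : bowenBall φ t ε x = ⋂ s ∈ Finset.range t, (φ^[s]) ⁻¹' Metric.ball (φ^[s] x) ε := by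
    ext y; simp [bowenBall, Metric.mem_ball, dist_comm]
  rw [h]
  exact isOpen_biInter_finset fun s _ => Metric.isOpen_ball.preimage (hφ.iterate s)

lemma mem_bowenBall_self {M : Type*} [MetricSpace M] {φ : M → M} {t : ℕ} {ε : ℝ} (hε : 0 < ε)
    (x : M) : x ∈ bowenBall φ t ε x := by
  intro s _; simpa using hε

lemma oscSet_bddAbove {M : Type*} [MetricSpace M] [CompactSpace M] {v : M → ℝ}
    (hv : Continuous v) (ε : ℝ) :
    BddAbove {d : ℝ | ∃ x y : M, dist x y ≤ ε ∧ d = |v x - v y|} := by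
  rcases isEmpty_or_nonempty M with h | h
  · have : {d : ℝ | ∃ x y : M, dist x y ≤ ε ∧ d = |v x - v y|} = ∅ := by
      ext d; simp
    rw [this]; exact bddAbove_empty
  · obtain ⟨z, -, hz⟩ := isCompact_univ.exists_isMaxOn Set.univ_nonempty
      (hv.abs.continuousOn)
    refine ⟨2 * |v z|, ?_⟩
    rintro d ⟨x, y, -, rfl⟩
    have h1 : |v x| ≤ |v z| := hz (Set.mem_univ x)
    have h2 : |v y| ≤ |v z| := hz (Set.mem_univ y)
    calc |v x - v y| ≤ |v x| + |v y| := abs_sub _ _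
      _ ≤ 2 * |v z| := by linarith

lemma osc_nonneg {M : Type*} [MetricSpace M] (v : M → ℝ) (ε : ℝ) :
    0 ≤ oscModulus v ε :=
  Real.sSup_nonneg (by rintro d ⟨x, y, -, rfl⟩; positivity)

lemma abs_birkhoff_sub_le {M : Type*} [MetricSpace M] [CompactSpace M] {φ : M → M}
    {v : M → ℝ} (hv : Continuous v) {t : ℕ} {ε : ℝ} {x y : M}
    (h : ∀ s < t, dist (φ^[s] x) (φ^[s] y) ≤ ε) :
    |birkhoffSumOf φ v t x - birkhoffSumOf φ v t y| ≤ t * oscModulus v ε := by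
  have heq : birkhoffSumOf φ v t x - birkhoffSumOf φ v t y
      = ∑ s ∈ Finset.range t, (v (φ^[s] x) - v (φ^[s] y)) := by
    simp [birkhoffSumOf, Finset.sum_sub_distrib]
  rw [heq]
  calc |∑ s ∈ Finset.range t, (v (φ^[s] x) - v (φ^[s] y))|
      ≤ ∑ s ∈ Finset.range t, |v (φ^[s] x) - v (φ^[s] y)| := Finset.abs_sum_le_sum_abs _ _
    _ ≤ ∑ _s ∈ Finset.range t, oscModulus v ε := Finset.sum_le_sum fun s hs =>
        le_csSup (oscSet_bddAbove hv ε) ⟨_, _, h s (Finset.mem_range.1 hs), rfl⟩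
    _ = t * oscModulus v ε := by simp [mul_comm]

lemma osc_tendsto {M : Type*} [MetricSpace M] [CompactSpace M] {v : M → ℝ}
    (hv : Continuous v) : Tendsto (oscModulus v) (𝓝[>] (0:ℝ)) (𝓝 0) := by
  rw [Metric.tendsto_nhdsWithin_nhds]
  intro η hη
  obtain ⟨δ, hδ, hδ'⟩ := Metric.uniformContinuous_iff.1
    (CompactSpace.uniformContinuous_of_continuous hv) (η/2) (by positivity)
  refine ⟨δ/2, by positivity, fun {ε} hεmem hεδ => ?_⟩
  rw [Real.dist_eq, sub_zero] at hεδ ⊢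
  have hε : 0 < ε := hεmem
  rw [abs_of_pos hε] at hεδ
  have hub : oscModulus v ε ≤ η / 2 := by
    refine Real.sSup_le ?_ (by positivity)
    rintro d ⟨x, y, hd, rfl⟩
    have : dist x y < δ := by linarith
    have := hδ' this
    rw [Real.dist_eq] at this
    exact this.le
  rw [abs_of_nonneg (osc_nonneg v ε)]
  linarith

lemma exists_good {M : Type*} [MetricSpace M] [MeasurableSpace M] [BorelSpace M]
    (P : Measure M) [IsProbabilityMeasure P]
    (hsupp : ∀ U : Set M, IsOpen U → U.Nonempty → 0 < P U)
    {Q : M → Prop} (hQ : ∀ᵐ y ∂P, Q y) {U : Set M} (hU : IsOpen U) (hne : U.Nonempty) :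
    ∃ y ∈ U, Q y := by
  by_contra h
  push_neg at h
  have hnull : P {y | ¬ Q y} = 0 := hQ
  have : P U = 0 := measure_mono_null (fun y hy => h y hy) hnull
  exact absurd this (hsupp U hU hne).ne'

theorem weak_gibbs_part1
    {M : Type*} [MetricSpace M] [CompactSpace M]
    [MeasurableSpace M] [BorelSpace M]
    (φ : M → M) (hφ : Continuous φ)
    (v : M → ℝ) (hv : Continuous v) (c : ℝ)
    (P : Measure M) [IsProbabilityMeasure P]
    (hsupp : ∀ U : Set M, IsOpen U → U.Nonempty → 0 < P U)
    (K : ℕ → ℝ → ℝ)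
    (hK1 : ∀ t : ℕ, 1 ≤ t → ∀ ε : ℝ, 0 < ε → 1 ≤ K t ε)
    (hGibbs : ∀ t : ℕ, 1 ≤ t → ∀ ε : ℝ, 0 < ε → ∀ᵐ x ∂P,
      ENNReal.ofReal ((K t ε)⁻¹ * Real.exp (birkhoffSumOf φ v t x - t * c))
          ≤ P (bowenBall φ t ε x)
        ∧ P (bowenBall φ t ε x)
          ≤ ENNReal.ofReal (K t ε * Real.exp (birkhoffSumOf φ v t x - t * c))) :
    (∀ x : M, ∀ t : ℕ, 1 ≤ t → ∀ ε : ℝ, 0 < ε →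
      ENNReal.ofReal ((max (K t (2 * ε)) (K t (ε / 2)))⁻¹ *
            Real.exp (birkhoffSumOf φ v t x - t * c - t * oscModulus v ε))
          ≤ P (bowenBall φ t ε x)
        ∧ P (bowenBall φ t ε x)
          ≤ ENNReal.ofReal (max (K t (2 * ε)) (K t (ε / 2)) *
              Real.exp (birkhoffSumOf φ v t x - t * c + t * oscModulus v ε))) := by
  intro x t ht ε hε
  have hγ0 : 0 ≤ oscModulus v ε := osc_nonneg v ε
  have hK2 : 1 ≤ K t (2 * ε) := hK1 t ht _ (by positivity)
  have hKh : 1 ≤ K t (ε / 2) := hK1 t ht _ (by positivity)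
  constructor
  · obtain ⟨y, hyB, hyQ⟩ := exists_good P hsupp (hGibbs t ht (ε/2) (by positivity))
      (isOpen_bowenBall hφ t (ε/2) x) ⟨x, mem_bowenBall_self (by positivity) x⟩
    have hsub : bowenBall φ t (ε/2) y ⊆ bowenBall φ t ε x := by
      intro z hz s hs
      calc dist (φ^[s] x) (φ^[s] z) ≤ dist (φ^[s] x) (φ^[s] y) + dist (φ^[s] y) (φ^[s] z) :=
          dist_triangle _ _ _
        _ < ε/2 + ε/2 := add_lt_add (hyB s hs) (hz s hs)
        _ = ε := by ring
    have hbir := abs_le.1 (abs_birkhoff_sub_le hv (φ := φ) (t := t) (ε := ε) (x := x) (y := y)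
      (fun s hs => (hyB s hs).le.trans (by linarith)))
    calc ENNReal.ofReal ((max (K t (2*ε)) (K t (ε/2)))⁻¹ *
            Real.exp (birkhoffSumOf φ v t x - t*c - t * oscModulus v ε))
        ≤ ENNReal.ofReal ((K t (ε/2))⁻¹ * Real.exp (birkhoffSumOf φ v t y - t*c)) := by
          apply ENNReal.ofReal_le_ofReal
          have h1 : (max (K t (2*ε)) (K t (ε/2)))⁻¹ ≤ (K t (ε/2))⁻¹ := by
            apply inv_anti₀ (by linarith) (le_max_right _ _)
          have h2 : Real.exp (birkhoffSumOf φ v t x - t*c - t * oscModulus v ε)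
              ≤ Real.exp (birkhoffSumOf φ v t y - t*c) := by
            apply Real.exp_le_exp.2; linarith [hbir.1]
          exact mul_le_mul h1 h2 (Real.exp_nonneg _) (by positivity)
      _ ≤ P (bowenBall φ t (ε/2) y) := hyQ.1
      _ ≤ P (bowenBall φ t ε x) := measure_mono hsub
  · obtain ⟨y, hyB, hyQ⟩ := exists_good P hsupp (hGibbs t ht (2*ε) (by positivity))
      (isOpen_bowenBall hφ t ε x) ⟨x, mem_bowenBall_self hε x⟩
    have hsub : bowenBall φ t ε x ⊆ bowenBall φ t (2*ε) y := by
      intro z hz s hs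
      calc dist (φ^[s] y) (φ^[s] z) ≤ dist (φ^[s] y) (φ^[s] x) + dist (φ^[s] x) (φ^[s] z) :=
          dist_triangle _ _ _
        _ < ε + ε := add_lt_add (by rw [dist_comm]; exact hyB s hs) (hz s hs)
        _ = 2*ε := by ring
    have hbir := abs_le.1 (abs_birkhoff_sub_le hv (φ := φ) (t := t) (ε := ε) (x := x) (y := y)
      (fun s hs => (hyB s hs).le))
    calc P (bowenBall φ t ε x) ≤ P (bowenBall φ t (2*ε) y) := measure_mono hsub
      _ ≤ ENNReal.ofReal (K t (2*ε) * Real.exp (birkhoffSumOf φ v t y - t*c)) := hyQ.2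
      _ ≤ ENNReal.ofReal (max (K t (2*ε)) (K t (ε/2)) *
            Real.exp (birkhoffSumOf φ v t x - t*c + t * oscModulus v ε)) := by
          apply ENNReal.ofReal_le_ofReal
          have h2 : Real.exp (birkhoffSumOf φ v t y - t*c)
              ≤ Real.exp (birkhoffSumOf φ v t x - t*c + t * oscModulus v ε) := by
            apply Real.exp_le_exp.2; linarith [hbir.2]
          exact mul_le_mul (le_max_left _ _) h2 (Real.exp_nonneg _) ((zero_le_one.trans hK2).trans (le_max_left _ _))

lemma ereal_tendsto_add {α : Type*} {l : Filter α} {f g : α → EReal}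
    (hf : Tendsto f l (𝓝 0)) (hg : Tendsto g l (𝓝 0)) :
    Tendsto (fun x => f x + g x) l (𝓝 0) := by
  have h := (EReal.continuousAt_add (p := ((0 : EReal), (0 : EReal)))
    (by simp) (by simp)).tendsto.comp (hf.prodMk_nhds hg)
  simpa [Function.comp_def] using h

theorem weak_gibbs_part2
    {M : Type*} [MetricSpace M] [CompactSpace M]
    (v : M → ℝ) (hv : Continuous v)
    (K : ℕ → ℝ → ℝ)
    (hK1 : ∀ t : ℕ, 1 ≤ t → ∀ ε : ℝ, 0 < ε → 1 ≤ K t ε)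
    (hKlim : Tendsto (fun ε : ℝ =>
        limsup (fun t : ℕ => (((t : ℝ)⁻¹ * Real.log (K t ε) : ℝ) : EReal)) atTop)
      (𝓝[>] (0 : ℝ)) (nhds (0 : EReal))) :
    Tendsto (fun ε : ℝ =>
        limsup (fun t : ℕ => (((t : ℝ)⁻¹ *
            Real.log (max (K t (2 * ε)) (K t (ε / 2)) * Real.exp (t * oscModulus v ε))
          : ℝ) : EReal)) atTop)
      (𝓝[>] (0 : ℝ)) (nhds (0 : EReal)) := by
  -- the two rescaling maps
  have hmul : Tendsto (fun ε : ℝ => 2 * ε) (𝓝[>] (0:ℝ)) (𝓝[>] (0:ℝ)) := by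
    rw [tendsto_nhdsWithin_iff]
    constructor
    · have h : Tendsto (fun ε : ℝ => 2 * ε) (𝓝 (0:ℝ)) (𝓝 (2 * 0)) :=
        (continuous_const.mul continuous_id).tendsto 0
      simpa using h.mono_left nhdsWithin_le_nhds
    · filter_upwards [self_mem_nhdsWithin] with ε (hε : ε ∈ Set.Ioi (0:ℝ))
      exact Set.mem_Ioi.2 (by have := Set.mem_Ioi.1 hε; linarith)
  have hdiv : Tendsto (fun ε : ℝ => ε / 2) (𝓝[>] (0:ℝ)) (𝓝[>] (0:ℝ)) := by
    rw [tendsto_nhdsWithin_iff]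
    constructor
    · have h : Tendsto (fun ε : ℝ => ε / 2) (𝓝 (0:ℝ)) (𝓝 ((0:ℝ) / 2)) :=
        (continuous_id.div_const 2).tendsto 0
      simpa using h.mono_left nhdsWithin_le_nhds
    · filter_upwards [self_mem_nhdsWithin] with ε (hε : ε ∈ Set.Ioi (0:ℝ))
      exact Set.mem_Ioi.2 (by have := Set.mem_Ioi.1 hε; linarith)
  have h2 := hKlim.comp hmul
  have hh := hKlim.comp hdiv
  have hγ : Tendsto (fun ε : ℝ => ((oscModulus v ε : ℝ) : EReal)) (𝓝[>] (0:ℝ)) (𝓝 0) := by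
    have h := (continuous_coe_real_ereal.tendsto 0).comp (osc_tendsto hv)
    exact h
  have hsum : Tendsto (fun ε : ℝ =>
      limsup (fun t : ℕ => (((t : ℝ)⁻¹ * Real.log (K t (2 * ε)) : ℝ) : EReal)) atTop +
        (limsup (fun t : ℕ => (((t : ℝ)⁻¹ * Real.log (K t (ε / 2)) : ℝ) : EReal)) atTop +
          ((oscModulus v ε : ℝ) : EReal))) (𝓝[>] (0:ℝ)) (𝓝 0) :=
    ereal_tendsto_add h2 (ereal_tendsto_add hh hγ)
  refine tendsto_of_tendsto_of_tendsto_of_le_of_le' tendsto_const_nhds hsum ?_ ?_ <;>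
    filter_upwards [self_mem_nhdsWithin] with ε hε
  all_goals have hεpos : (0:ℝ) < ε := Set.mem_Ioi.1 hε
  all_goals have hγ0 : 0 ≤ oscModulus v ε := osc_nonneg v ε
  · -- 0 ≤ limsup
    refine le_limsup_of_frequently_le ((eventually_atTop.2 ⟨1, fun t ht => ?_⟩).frequently)
      (by isBoundedDefault)
    have ht0 : (0:ℝ) < t := by exact_mod_cast ht
    have hK2 : 1 ≤ K t (2 * ε) := hK1 t ht _ (by linarith)
    have hone : 1 ≤ max (K t (2 * ε)) (K t (ε / 2)) * Real.exp (t * oscModulus v ε) := by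
      have he : 1 ≤ Real.exp (t * oscModulus v ε) := Real.one_le_exp (by positivity)
      calc (1:ℝ) = 1 * 1 := by ring
        _ ≤ max (K t (2 * ε)) (K t (ε / 2)) * Real.exp (t * oscModulus v ε) :=
          mul_le_mul (hK2.trans (le_max_left _ _)) he zero_le_one
            (zero_le_one.trans (hK2.trans (le_max_left _ _)))
    rw [show ((0:EReal) = ((0:ℝ):EReal)) by simp, EReal.coe_le_coe_iff]
    exact mul_nonneg (by positivity) (Real.log_nonneg hone)
  · -- limsup ≤ sum of limsups
    set u : ℕ → EReal := fun t => (((t : ℝ)⁻¹ * Real.log (K t (2 * ε)) : ℝ) : EReal) with hu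
    set w : ℕ → EReal := fun t => (((t : ℝ)⁻¹ * Real.log (K t (ε / 2)) : ℝ) : EReal) with hw
    have hbot : (⊥ : EReal) < 0 := by simpa using EReal.bot_lt_coe 0
    have hu0 : (0:EReal) ≤ limsup u atTop := by
      refine le_limsup_of_frequently_le ((eventually_atTop.2 ⟨1, fun t ht => ?_⟩).frequently)
        (by isBoundedDefault)
      rw [hu]
      rw [show ((0:EReal) = ((0:ℝ):EReal)) by simp, EReal.coe_le_coe_iff]
      exact mul_nonneg (by positivity) (Real.log_nonneg (hK1 t ht _ (by linarith)))
    have hwγ0 : (0:EReal) ≤ limsup (fun t => w t + ((oscModulus v ε : ℝ) : EReal)) atTop := by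
      refine le_limsup_of_frequently_le ((eventually_atTop.2 ⟨1, fun t ht => ?_⟩).frequently)
        (by isBoundedDefault)
      rw [hw]
      dsimp only
      rw [← EReal.coe_add, show ((0:EReal) = ((0:ℝ):EReal)) by simp, EReal.coe_le_coe_iff]
      have h1 : (0:ℝ) ≤ (t:ℝ)⁻¹ * Real.log (K t (ε / 2)) :=
        mul_nonneg (by positivity) (Real.log_nonneg (hK1 t ht _ (by linarith)))
      linarith
    have hstep1 : limsup (fun t : ℕ => (((t : ℝ)⁻¹ *
          Real.log (max (K t (2 * ε)) (K t (ε / 2)) * Real.exp (t * oscModulus v ε))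
          : ℝ) : EReal)) atTop
        ≤ limsup (fun t => u t + (w t + ((oscModulus v ε : ℝ) : EReal))) atTop := by
      refine limsup_le_limsup (eventually_atTop.2 ⟨1, fun t ht => ?_⟩)
        (by isBoundedDefault) (by isBoundedDefault)
      rw [hu, hw]
      dsimp only
      rw [← EReal.coe_add, ← EReal.coe_add, EReal.coe_le_coe_iff]
      have ht0 : (0:ℝ) < t := by exact_mod_cast ht
      have hK2 : 1 ≤ K t (2 * ε) := hK1 t ht _ (by linarith)
      have hKh : 1 ≤ K t (ε / 2) := hK1 t ht _ (by linarith)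
      have hmaxpos : (0:ℝ) < max (K t (2 * ε)) (K t (ε / 2)) :=
        lt_of_lt_of_le one_pos (hK2.trans (le_max_left _ _))
      rw [Real.log_mul hmaxpos.ne' (Real.exp_ne_zero _), Real.log_exp]
      have hlogmax : Real.log (max (K t (2 * ε)) (K t (ε / 2)))
          ≤ Real.log (K t (2 * ε)) + Real.log (K t (ε / 2)) := by
        have hle : max (K t (2 * ε)) (K t (ε / 2)) ≤ K t (2 * ε) * K t (ε / 2) :=
          max_le (le_mul_of_one_le_right (by linarith) hKh)
            (le_mul_of_one_le_left (by linarith) hK2)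
        calc Real.log (max (K t (2 * ε)) (K t (ε / 2)))
            ≤ Real.log (K t (2 * ε) * K t (ε / 2)) := Real.log_le_log hmaxpos hle
          _ = Real.log (K t (2 * ε)) + Real.log (K t (ε / 2)) :=
            Real.log_mul (by linarith) (by linarith)
      have key : (t:ℝ)⁻¹ * (Real.log (max (K t (2 * ε)) (K t (ε / 2))) + t * oscModulus v ε)
          = (t:ℝ)⁻¹ * Real.log (max (K t (2 * ε)) (K t (ε / 2))) + oscModulus v ε := by
        rw [mul_add, ← mul_assoc, inv_mul_cancel₀ ht0.ne', one_mul]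
      rw [key]
      have hmono := mul_le_mul_of_nonneg_left hlogmax (inv_nonneg.2 ht0.le)
      rw [mul_add] at hmono
      linarith
    have hstep3 : limsup (fun t => w t + ((oscModulus v ε : ℝ) : EReal)) atTop
        ≤ limsup w atTop + ((oscModulus v ε : ℝ) : EReal) := by
      have h := EReal.limsup_add_le (f := atTop) (u := w)
        (v := fun _ => ((oscModulus v ε : ℝ) : EReal))
        (Or.inr (by rw [limsup_const]; exact EReal.coe_ne_top _))
        (Or.inr (by rw [limsup_const]; exact EReal.coe_ne_bot _))
      rwa [limsup_const] at h
    calc limsup (fun t : ℕ => (((t : ℝ)⁻¹ *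
          Real.log (max (K t (2 * ε)) (K t (ε / 2)) * Real.exp (t * oscModulus v ε))
          : ℝ) : EReal)) atTop
        ≤ limsup (fun t => u t + (w t + ((oscModulus v ε : ℝ) : EReal))) atTop := hstep1
      _ ≤ limsup u atTop + limsup (fun t => w t + ((oscModulus v ε : ℝ) : EReal)) atTop :=
        EReal.limsup_add_le (Or.inl (hbot.trans_le hu0).ne') (Or.inr (hbot.trans_le hwγ0).ne')
      _ ≤ limsup u atTop + (limsup w atTop + ((oscModulus v ε : ℝ) : EReal)) :=
        add_le_add le_rfl hstep3

/-- **Almost-everywhere weak Gibbs bounds upgrade to everywhere.**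
Let `φ` be a continuous self-map of a compact metric space `M`, `v` continuous, `c ∈ ℝ`,
and `P` a fully supported Borel probability measure satisfying, for each `t ≥ 1` and
`ε > 0`, the two-sided Gibbs bounds with constants `K_t(ε) ≥ 1`
(`lim_{ε↓0} limsup_t t⁻¹ log K_t(ε) = 0`) at `P`-almost every point.  Then the analogous
bounds hold at *every* point with constants `K′_t(ε) = max(K_t(2ε), K_t(ε/2))` and an
extra factor `e^{±tγ_ε(v)}`, and these new constants again satisfy
`lim_{ε↓0} limsup_t t⁻¹ log (K′_t(ε) e^{tγ_ε(v)}) = 0`, so `P` is a weak Gibbs measure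
for `v`. -/
theorem weak_gibbs_ae_to_everywhere
    {M : Type*} [MetricSpace M] [CompactSpace M]
    [MeasurableSpace M] [BorelSpace M]
    (φ : M → M) (hφ : Continuous φ)
    (v : M → ℝ) (hv : Continuous v) (c : ℝ)
    (P : Measure M) [IsProbabilityMeasure P]
    (hsupp : ∀ U : Set M, IsOpen U → U.Nonempty → 0 < P U)
    (K : ℕ → ℝ → ℝ)
    (hK1 : ∀ t : ℕ, 1 ≤ t → ∀ ε : ℝ, 0 < ε → 1 ≤ K t ε)
    (hKlim : Tendsto (fun ε : ℝ =>
        limsup (fun t : ℕ => (((t : ℝ)⁻¹ * Real.log (K t ε) : ℝ) : EReal)) atTop)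
      (𝓝[>] (0 : ℝ)) (nhds (0 : EReal)))
    (hGibbs : ∀ t : ℕ, 1 ≤ t → ∀ ε : ℝ, 0 < ε → ∀ᵐ x ∂P,
      ENNReal.ofReal ((K t ε)⁻¹ * Real.exp (birkhoffSumOf φ v t x - t * c))
          ≤ P (bowenBall φ t ε x)
        ∧ P (bowenBall φ t ε x)
          ≤ ENNReal.ofReal (K t ε * Real.exp (birkhoffSumOf φ v t x - t * c))) :
    (∀ x : M, ∀ t : ℕ, 1 ≤ t → ∀ ε : ℝ, 0 < ε →
      ENNReal.ofReal ((max (K t (2 * ε)) (K t (ε / 2)))⁻¹ *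
            Real.exp (birkhoffSumOf φ v t x - t * c - t * oscModulus v ε))
          ≤ P (bowenBall φ t ε x)
        ∧ P (bowenBall φ t ε x)
          ≤ ENNReal.ofReal (max (K t (2 * ε)) (K t (ε / 2)) *
              Real.exp (birkhoffSumOf φ v t x - t * c + t * oscModulus v ε)))
    ∧ Tendsto (fun ε : ℝ =>
        limsup (fun t : ℕ => (((t : ℝ)⁻¹ *
            Real.log (max (K t (2 * ε)) (K t (ε / 2)) * Real.exp (t * oscModulus v ε))
          : ℝ) : EReal)) atTop)
      (𝓝[>] (0 : ℝ)) (nhds (0 : EReal)) := by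
  exact ⟨weak_gibbs_part1 φ hφ v hv c P hsupp K hK1 hGibbs,
    weak_gibbs_part2 (M := M) v hv K hK1 hKlim⟩
end

section
/- Let φ : [0,1] → [0,1] be the tent map φ(x) = 1 − |1 − 2x| and let t ≥ 1 be an integer. Then the fixed-point set of the t-th iterate is Fix(φ^t) = { 2(j−1)/(2^t − 1) : j = 1,…,2^{t−1} } ∪ { 2j/(2^t + 1) : j = 1,…,2^{t−1} }. In particular Fix(φ^t) has exactly 2^t elements, and every x ∈ [0,1] satisfies dist(x, Fix(φ^t)) ≤ 2^{−t}. -/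
/-- The tent map `φ(x) = 1 − |1 − 2x|` on `[0,1]`. -/
noncomputable def tentMap (x : ℝ) : ℝ := 1 - |1 - 2 * x|

lemma tent_step (y : ℝ) : tentMap (2 * |y - round y|) = 2 * |2*y - round (2*y)| := by
  set r : ℤ := round y with hr
  set f : ℝ := y - r with hf
  have habs : |f| ≤ 1/2 := abs_sub_round y
  have hf1 : -(1/2) ≤ f := by cases abs_le.mp habs; linarith
  have hf2 : f ≤ 1/2 := (abs_le.mp habs).2
  have h2y : 2*y = 2*f + ((2*r : ℤ) : ℝ) := by push_cast [hf]; ring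
  have hround : round (2*y) = round (2*f) + 2*r := by rw [h2y, round_add_intCast]
  rw [hround]
  have key : ∀ c : ℤ, round (2*f) = c → tentMap (2*|f|) = 2*|2*f - c| := by
    intro c hc
    rw [← hc]
    rcases le_or_gt 0 f with h0 | h0
    · rcases lt_or_ge f (1/4) with h1 | h1
      · have : round (2*f) = 0 := by
          rw [round_eq, Int.floor_eq_iff]; constructor <;> push_cast <;> linarith
        rw [this, abs_of_nonneg h0]
        push_cast
        rw [show |2*f - 0| = 2*f by rw [abs_of_nonneg] <;> linarith]
        unfold tentMap
        rw [show |1 - 2*(2*f)| = 1 - 4*f by rw [abs_of_nonneg] <;> linarith]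
        ring
      · have : round (2*f) = 1 := by
          rw [round_eq, Int.floor_eq_iff]; constructor <;> push_cast <;> linarith
        rw [this, abs_of_nonneg h0]
        push_cast
        rw [show |2*f - 1| = 1 - 2*f by rw [abs_of_nonpos] <;> linarith]
        unfold tentMap
        rw [show |1 - 2*(2*f)| = 4*f - 1 by rw [abs_of_nonpos] <;> linarith]
        ring
    · rcases le_or_gt (-(1/4)) f with h1 | h1
      · have : round (2*f) = 0 := by
          rw [round_eq, Int.floor_eq_iff]; constructor <;> push_cast <;> linarith
        rw [this, abs_of_neg h0]
        push_cast
        rw [show |2*f - 0| = -(2*f) by rw [abs_of_nonpos] <;> linarith]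
        unfold tentMap
        rw [show |1 - 2*(2*(-f))| = 1 + 4*f by rw [abs_of_nonneg] <;> linarith]
        ring
      · have : round (2*f) = -1 := by
          rw [round_eq, Int.floor_eq_iff]; constructor <;> push_cast <;> linarith
        rw [this, abs_of_neg h0]
        push_cast
        rw [show |2*f - (-1)| = 2*f + 1 by rw [abs_of_nonneg] <;> linarith]
        unfold tentMap
        rw [show |1 - 2*(2*(-f))| = -(1 + 4*f) by rw [abs_of_nonpos] <;> linarith]
        ring
  have := key (round (2*f)) rfl
  rw [this]
  push_cast
  rw [hf]
  ring_nf

lemma tent_iter (t : ℕ) (y : ℝ) :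
    tentMap^[t] (2 * |y - round y|) = 2 * |2^t * y - round (2^t * y)| := by
  induction t generalizing y with
  | zero => simp
  | succ n ih =>
    rw [Function.iterate_succ_apply', ih, tent_step]
    norm_num [pow_succ]
    ring_nf

lemma tent_formula (t : ℕ) (ht : 1 ≤ t) (x : ℝ) (hx : x ∈ Set.Icc (0:ℝ) 1) :
    tentMap^[t] x = 2 * |2^(t-1) * x - round (2^(t-1) * x)| := by
  obtain ⟨hx0, hx1⟩ := hx
  have hxT : 2 * |x/2 - round (x/2)| = x := by
    rcases lt_or_ge x 1 with h | h
    · have : round (x/2) = 0 := by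
        rw [round_eq, Int.floor_eq_iff]; constructor <;> push_cast <;> linarith
      rw [this]; push_cast
      rw [show |x/2 - 0| = x/2 by rw [abs_of_nonneg] <;> linarith]; ring
    · have hx1' : x = 1 := le_antisymm hx1 h
      subst hx1'
      have : round ((1:ℝ)/2) = 1 := by
        rw [round_eq, Int.floor_eq_iff]; constructor <;> norm_num
      rw [this]; push_cast
      rw [show |(1:ℝ)/2 - 1| = 1/2 by rw [abs_of_nonpos] <;> norm_num]; norm_num
  have h2 : (2:ℝ)^t * (x/2) = 2^(t-1) * x := by
    have h : (2:ℝ)^t = 2 * 2^(t-1) := by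
      rw [← pow_succ']; congr 1; omega
    rw [h]; ring
  calc tentMap^[t] x = tentMap^[t] (2 * |x/2 - round (x/2)|) := by rw [hxT]
    _ = 2 * |2^t * (x/2) - round (2^t * (x/2))| := tent_iter t (x/2)
    _ = _ := by rw [h2]

lemma tent_set_eq (t : ℕ) (ht : 1 ≤ t) :
    {x ∈ Set.Icc (0 : ℝ) 1 | tentMap^[t] x = x}
        = {x : ℝ | ∃ j : ℕ, 1 ≤ j ∧ j ≤ 2 ^ (t - 1) ∧ x = 2 * ((j : ℝ) - 1) / (2 ^ t - 1)}
          ∪ {x : ℝ | ∃ j : ℕ, 1 ≤ j ∧ j ≤ 2 ^ (t - 1) ∧ x = 2 * (j : ℝ) / (2 ^ t + 1)} := by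
  set M : ℕ := 2^(t-1) with hM
  have hNn : 2^t = 2 * M := by rw [hM, ← pow_succ']; congr 1; omega
  have hM1 : 1 ≤ M := Nat.one_le_two_pow
  have hMR : (1:ℝ) ≤ (M:ℝ) := by exact_mod_cast hM1
  have hN : (2:ℝ)^t = 2 * (M:ℝ) := by exact_mod_cast hNn
  have hMpow : ((M:ℕ):ℝ) = (2:ℝ)^(t-1) := by rw [hM]; push_cast; ring
  ext x
  simp only [Set.mem_setOf_eq, Set.mem_union, Set.mem_Icc]
  constructor
  · rintro ⟨⟨hx0, hx1⟩, hfix⟩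
    rw [tent_formula t ht x ⟨hx0, hx1⟩, ← hMpow] at hfix
    set z : ℝ := (M:ℝ) * x with hz
    set n : ℤ := round z with hn
    have hz0 : 0 ≤ z := by positivity
    have hn0 : 0 ≤ n := by
      rw [hn, round_eq]
      apply Int.le_floor.mpr; push_cast; linarith
    have hcast : ((n.toNat:ℕ):ℝ) = (n:ℝ) := by exact_mod_cast Int.toNat_of_nonneg hn0
    rcases le_or_gt (n:ℝ) z with hc | hc
    · left
      rw [abs_of_nonneg (by linarith)] at hfix
      have hxeq : x * (2^t - 1) = 2 * n := by rw [hN]; push_cast; linarith [hfix]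
      have hb : (2*n : ℝ) ≤ 2*(M:ℝ) - 1 := by
        calc (2*n:ℝ) = x * (2^t-1) := hxeq.symm
          _ ≤ 1 * (2^t-1) := by
              apply mul_le_mul_of_nonneg_right hx1; rw [hN]; linarith
          _ = 2*(M:ℝ) - 1 := by rw [hN]; ring
      have hbZ : 2 * n ≤ 2 * (M:ℤ) - 1 := by exact_mod_cast hb
      refine ⟨n.toNat + 1, by omega, by omega, ?_⟩
      have hden : (2:ℝ)^t - 1 ≠ 0 := by rw [hN]; intro h; nlinarith
      field_simp
      push_cast [hcast]
      linarith [hxeq]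
    · right
      rw [abs_of_neg (by linarith)] at hfix
      have hxeq : x * (2^t + 1) = 2 * n := by rw [hN]; push_cast; linarith [hfix]
      have hn1 : 1 ≤ n := by
        rcases lt_or_ge 0 n with h | h
        · omega
        · exfalso
          have : (n:ℝ) ≤ 0 := by exact_mod_cast h
          linarith
      have hb : (2*n : ℝ) ≤ 2*(M:ℝ) + 1 := by
        calc (2*n:ℝ) = x * (2^t+1) := hxeq.symm
          _ ≤ 1 * (2^t+1) := by
              apply mul_le_mul_of_nonneg_right hx1; rw [hN]; linarith
          _ = 2*(M:ℝ) + 1 := by rw [hN]; ring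
      have hbZ : 2 * n ≤ 2 * (M:ℤ) + 1 := by exact_mod_cast hb
      refine ⟨n.toNat, by omega, by omega, ?_⟩
      have hden : (2:ℝ)^t + 1 ≠ 0 := by positivity
      field_simp
      push_cast [hcast]
      linarith [hxeq]
  · have hIcc : ∀ j : ℕ, 1 ≤ j → j ≤ M →
        ∀ x', (x' = 2 * ((j:ℝ)-1) / (2^t-1) ∨ x' = 2 * (j:ℝ) / (2^t+1)) →
        (0 ≤ x' ∧ x' ≤ 1) ∧ tentMap^[t] x' = x' := by
      intro j hj1 hj2 x' hx'
      have hj1R : (1:ℝ) ≤ (j:ℝ) := by exact_mod_cast hj1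
      have hj2R : (j:ℝ) ≤ (M:ℝ) := by exact_mod_cast hj2
      have hd1 : (0:ℝ) < 2^t - 1 := by rw [hN]; linarith
      have hd2 : (0:ℝ) < 2^t + 1 := by positivity
      have h2M1 : (2*(M:ℝ)-1) ≠ 0 := by linarith
      have h2M2 : (2*(M:ℝ)+1) ≠ 0 := by linarith
      have hmem : 0 ≤ x' ∧ x' ≤ 1 := by
        rcases hx' with h | h <;> subst h
        · exact ⟨div_nonneg (by linarith) (by linarith),
            by rw [div_le_one hd1, hN]; linarith⟩
        · exact ⟨div_nonneg (by linarith) (by linarith),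
            by rw [div_le_one hd2, hN]; linarith⟩
      refine ⟨hmem, ?_⟩
      rw [tent_formula t ht x' ⟨hmem.1, hmem.2⟩, ← hMpow]
      rcases hx' with h | h
      · have hzval : (M:ℝ) * x' = ((j:ℝ)-1) + ((j:ℝ)-1)/(2*(M:ℝ)-1) := by
          rw [h, hN]; field_simp [show (M:ℝ)*2 - 1 ≠ 0 by linarith]; ring
        have hfr0 : (0:ℝ) ≤ ((j:ℝ)-1)/(2*(M:ℝ)-1) :=
          div_nonneg (by linarith) (by linarith)
        have hfr1 : ((j:ℝ)-1)/(2*(M:ℝ)-1) < 1/2 := by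
          rw [div_lt_iff₀ (by linarith)]; linarith
        have hround : round ((M:ℝ) * x') = (j:ℤ) - 1 := by
          rw [round_eq, Int.floor_eq_iff, hzval]
          constructor <;> push_cast <;> linarith
        rw [hround]
        push_cast
        rw [hzval, h, hN]
        rw [show ((j:ℝ)-1) + ((j:ℝ)-1)/(2*(M:ℝ)-1) - ((j:ℝ)-1)
              = ((j:ℝ)-1)/(2*(M:ℝ)-1) from by ring]
        rw [abs_of_nonneg hfr0, mul_div_assoc]
      · have hzval : (M:ℝ) * x' = (j:ℝ) - (j:ℝ)/(2*(M:ℝ)+1) := by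
          rw [h, hN]; field_simp; ring
        have hfr0 : (0:ℝ) < (j:ℝ)/(2*(M:ℝ)+1) := by positivity
        have hfr1 : (j:ℝ)/(2*(M:ℝ)+1) ≤ 1/2 := by
          rw [div_le_iff₀ (by linarith)]; linarith
        have hround : round ((M:ℝ) * x') = (j:ℤ) := by
          rw [round_eq, Int.floor_eq_iff, hzval]
          constructor <;> push_cast <;> linarith
        rw [hround]
        push_cast
        rw [hzval, h, hN]
        rw [show (j:ℝ) - (j:ℝ)/(2*(M:ℝ)+1) - (j:ℝ)
              = -((j:ℝ)/(2*(M:ℝ)+1)) from by ring]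
        rw [abs_neg, abs_of_nonneg hfr0.le, mul_div_assoc]
    rintro (⟨j, hj1, hj2, hx⟩ | ⟨j, hj1, hj2, hx⟩)
    · exact hIcc j hj1 hj2 x (Or.inl hx)
    · exact hIcc j hj1 hj2 x (Or.inr hx)

lemma tent_card (t : ℕ) (ht : 1 ≤ t) :
    {x ∈ Set.Icc (0 : ℝ) 1 | tentMap^[t] x = x}.ncard = 2 ^ t := by
  set M : ℕ := 2^(t-1) with hM
  have hNn : 2^t = 2 * M := by rw [hM, ← pow_succ']; congr 1; omega
  have hM1 : 1 ≤ M := Nat.one_le_two_pow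
  have hMR : (1:ℝ) ≤ (M:ℝ) := by exact_mod_cast hM1
  have hN : (2:ℝ)^t = 2 * (M:ℝ) := by exact_mod_cast hNn
  have hd1 : (0:ℝ) < 2^t - 1 := by rw [hN]; linarith
  have hd2 : (0:ℝ) < 2^t + 1 := by positivity
  rw [tent_set_eq t ht]
  set f : ℕ → ℝ := fun j => 2 * ((j : ℝ) - 1) / (2 ^ t - 1) with hf
  set g : ℕ → ℝ := fun j => 2 * (j : ℝ) / (2 ^ t + 1) with hg
  have hA : {x : ℝ | ∃ j : ℕ, 1 ≤ j ∧ j ≤ M ∧ x = f j} = f '' Set.Icc 1 M := by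
    ext x; simp only [Set.mem_setOf_eq, Set.mem_image, Set.mem_Icc]
    constructor
    · rintro ⟨j, h1, h2, h3⟩; exact ⟨j, ⟨h1, h2⟩, h3.symm⟩
    · rintro ⟨j, ⟨h1, h2⟩, h3⟩; exact ⟨j, h1, h2, h3.symm⟩
  have hB : {x : ℝ | ∃ j : ℕ, 1 ≤ j ∧ j ≤ M ∧ x = g j} = g '' Set.Icc 1 M := by
    ext x; simp only [Set.mem_setOf_eq, Set.mem_image, Set.mem_Icc]
    constructor
    · rintro ⟨j, h1, h2, h3⟩; exact ⟨j, ⟨h1, h2⟩, h3.symm⟩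
    · rintro ⟨j, ⟨h1, h2⟩, h3⟩; exact ⟨j, h1, h2, h3.symm⟩
  have hfin : (Set.Icc 1 M).Finite := Set.finite_Icc _ _
  have hinjf : Set.InjOn f (Set.Icc 1 M) := by
    intro a _ b _ hab
    simp only [hf] at hab
    field_simp at hab
    exact_mod_cast (by linarith : (a:ℝ) = b)
  have hinjg : Set.InjOn g (Set.Icc 1 M) := by
    intro a _ b _ hab
    simp only [hg] at hab
    field_simp at hab
    exact_mod_cast hab
  have hdisj : Disjoint (f '' Set.Icc 1 M) (g '' Set.Icc 1 M) := by
    rw [Set.disjoint_left]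
    rintro x ⟨j, ⟨hj1, hj2⟩, rfl⟩ ⟨k, ⟨hk1, hk2⟩, hk⟩
    simp only [hf, hg] at hk
    have hne1 : (2*(M:ℝ) - 1) ≠ 0 := by linarith
    have hne2 : (2*(M:ℝ) + 1) ≠ 0 := by linarith
    have hcross : ((k:ℝ)) * (2*(M:ℝ) - 1) = ((j:ℝ) - 1) * (2*(M:ℝ) + 1) := by
      rw [hN] at hk
      field_simp at hk
      linarith
    have hZ : (k:ℤ) * (2*(M:ℤ) - 1) = ((j:ℤ) - 1) * (2*(M:ℤ) + 1) := by
      exact_mod_cast hcross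
    have hj2' : (j:ℤ) ≤ M := by exact_mod_cast hj2
    have hk2' : (k:ℤ) ≤ M := by exact_mod_cast hk2
    have hj1' : (1:ℤ) ≤ j := by exact_mod_cast hj1
    have hk1' : (1:ℤ) ≤ k := by exact_mod_cast hk1
    have hM1' : (1:ℤ) ≤ M := by exact_mod_cast hM1
    rcases le_or_gt (k:ℤ) ((j:ℤ) - 1) with h | h
    · nlinarith
    · nlinarith
  rw [hA, hB, Set.ncard_union_eq hdisj (hfin.image f) (hfin.image g),
    Set.ncard_image_of_injOn hinjf, Set.ncard_image_of_injOn hinjg]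
  rw [Set.ncard_eq_toFinset_card', Set.toFinset_Icc, Nat.card_Icc]
  omega

lemma tent_dist (t : ℕ) (ht : 1 ≤ t) :
    ∀ x ∈ Set.Icc (0 : ℝ) 1,
        Metric.infDist x {y ∈ Set.Icc (0 : ℝ) 1 | tentMap^[t] y = y} ≤ 1 / 2 ^ t := by
  set M : ℕ := 2^(t-1) with hM
  have hNn : 2^t = 2 * M := by rw [hM, ← pow_succ']; congr 1; omega
  have hM1 : 1 ≤ M := Nat.one_le_two_pow
  have hMR : (1:ℝ) ≤ (M:ℝ) := by exact_mod_cast hM1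
  have hN : (2:ℝ)^t = 2 * (M:ℝ) := by exact_mod_cast hNn
  have hd2 : (0:ℝ) < 2^t + 1 := by positivity
  rintro x ⟨hx0, hx1⟩
  set r : ℤ := round ((2^t + 1) * x / 2) with hr
  have hr0 : 0 ≤ r := by
    rw [hr, round_eq]
    apply Int.le_floor.mpr
    push_cast
    positivity
  set m : ℕ := min r.toNat M with hm
  set p : ℝ := 2 * (m:ℝ) / (2^t + 1) with hp
  have hpmem : p ∈ {y ∈ Set.Icc (0 : ℝ) 1 | tentMap^[t] y = y} := by
    rw [tent_set_eq t ht]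
    rcases Nat.eq_zero_or_pos m with h0 | h1
    · left
      refine ⟨1, le_refl _, hM1, ?_⟩
      rw [hp, h0]
      push_cast
      norm_num
    · right
      exact ⟨m, h1, by omega, rfl⟩
  refine le_trans (Metric.infDist_le_dist_of_mem hpmem) ?_
  rw [Real.dist_eq]
  have habs : |(2^t + 1) * x / 2 - r| ≤ 1/2 := abs_sub_round _
  have hpt : (0:ℝ) < 2^t := by positivity
  have h1 : (1:ℝ)/(2^t+1) ≤ 1/2^t := by
    rw [div_le_div_iff₀ hd2 hpt]; linarith
  rcases le_or_gt r.toNat M with hcase | hcase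
  · have hmr : (m:ℝ) = (r:ℝ) := by
      have : m = r.toNat := by omega
      rw [this]
      exact_mod_cast Int.toNat_of_nonneg hr0
    refine le_trans ?_ h1
    rw [hp, hmr, abs_le]
    obtain ⟨ha1, ha2⟩ := abs_le.mp habs
    constructor
    · have e1 : x - 2*(r:ℝ)/(2^t+1) + 1/(2^t+1)
          = (2*((2^t+1)*x/2 - (r:ℝ)) + 1)/(2^t+1) := by
        field_simp
      have pos : (0:ℝ) ≤ (2*((2^t+1)*x/2 - (r:ℝ)) + 1)/(2^t+1) :=
        div_nonneg (by linarith) hd2.le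
      linarith
    · have e2 : 1/(2^t+1) - (x - 2*(r:ℝ)/(2^t+1))
          = (1 - 2*((2^t+1)*x/2 - (r:ℝ)))/(2^t+1) := by
        field_simp
      have pos : (0:ℝ) ≤ (1 - 2*((2^t+1)*x/2 - (r:ℝ)))/(2^t+1) :=
        div_nonneg (by linarith) hd2.le
      linarith
  · have hmM : m = M := by omega
    have hrR : (M:ℝ) + 1 ≤ (r:ℝ) := by
      have : (M:ℤ) + 1 ≤ r := by omega
      exact_mod_cast this
    have hxx : (2*(M:ℝ)+1) * x ≥ 2*(M:ℝ)+1 := by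
      have h2 := (abs_le.mp habs).1
      rw [hN] at h2
      nlinarith
    have hx1' : x = 1 := by
      apply le_antisymm hx1
      nlinarith
    subst hx1'
    rw [hp, hmM, hN]
    have hval : (1:ℝ) - 2*(M:ℝ)/(2*(M:ℝ)+1) = 1/(2*(M:ℝ)+1) := by
      field_simp; ring
    rw [hval, abs_of_pos (by positivity)]
    rw [div_le_div_iff₀ (by linarith) (by linarith)]
    linarith

/-- **Periodic points of the tent map.**
For every integer `t ≥ 1`, the fixed points of the `t`-th iterate of the tent map on
`[0,1]` are exactly the points `2(j−1)/(2^t−1)` and `2j/(2^t+1)` for `j = 1,…,2^{t−1}`;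
there are exactly `2^t` of them, and every `x ∈ [0,1]` is within distance `2^{−t}` of
one of them. -/
theorem tent_map_periodic_points (t : ℕ) (ht : 1 ≤ t) :
    ({x ∈ Set.Icc (0 : ℝ) 1 | tentMap^[t] x = x}
        = {x : ℝ | ∃ j : ℕ, 1 ≤ j ∧ j ≤ 2 ^ (t - 1) ∧ x = 2 * ((j : ℝ) - 1) / (2 ^ t - 1)}
          ∪ {x : ℝ | ∃ j : ℕ, 1 ≤ j ∧ j ≤ 2 ^ (t - 1) ∧ x = 2 * (j : ℝ) / (2 ^ t + 1)})
    ∧ {x ∈ Set.Icc (0 : ℝ) 1 | tentMap^[t] x = x}.ncard = 2 ^ t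
    ∧ ∀ x ∈ Set.Icc (0 : ℝ) 1,
        Metric.infDist x {y ∈ Set.Icc (0 : ℝ) 1 | tentMap^[t] y = y} ≤ 1 / 2 ^ t := by
  exact ⟨tent_set_eq t ht, tent_card t ht, tent_dist t ht⟩
end

section
/- Let φ be the tent map φ(x) = 1 − |1 − 2x| on [0,1], set I_n := (2^{−n−1}, 2^{−n}] for n ∈ ℕ, and define the induced map ψ : [0,1) → [0,1) by ψ(0) := 0 and ψ(x) := φ^{n+1}(x) for x ∈ I_n. For a sequence t : ℕ → ℕ define X(t) := Σ_{k=0}^∞ 2^{−(t_0+⋯+t_k)} (−2)^{−k} (the series converges absolutely). Then for every t : ℕ → ℕ: (i) X(t) ∈ I_{t_0}; (ii) ψ(X(t)) = X(σ(t)), where σ is the left shift, (σ t)(k) = t(k+1); (iii) X(t) is the unique point of [0,1) whose ψ-itinerary is t, i.e., ∩_{k∈ℕ} ψ^{−k}(I_{t_k}) = { X(t) }. -/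
/-- The interval `I_n = (2^{−n−1}, 2^{−n}]` of points with first return time `n + 1`
to `I₀` under the tent map. -/
noncomputable def returnInterval (n : ℕ) : Set ℝ :=
  Set.Ioc ((2 : ℝ) ^ (-(n : ℤ) - 1)) ((2 : ℝ) ^ (-(n : ℤ)))

/-- The point `X(t) = Σ_k 2^{−(t₀+⋯+t_k)} (−2)^{−k}` with prescribed itinerary `t`
for the induced map of the tent map (the series converges absolutely). -/
noncomputable def inducedPoint (t : ℕ → ℕ) : ℝ :=
  ∑' k : ℕ, (2 : ℝ) ^ (-((∑ j ∈ Finset.range (k + 1), t j : ℕ) : ℤ)) *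
    (-2 : ℝ) ^ (-(k : ℤ))

namespace TentAux

def S (t : ℕ → ℕ) (k : ℕ) : ℕ := ∑ j ∈ Finset.range (k + 1), t j

noncomputable def f (t : ℕ → ℕ) (k : ℕ) : ℝ :=
  (2 : ℝ) ^ (-((S t k : ℕ) : ℤ)) * (-2 : ℝ) ^ (-(k : ℤ))

lemma inducedPoint_eq (t : ℕ → ℕ) : inducedPoint t = ∑' k, f t k := rfl

lemma S_mono (t : ℕ → ℕ) (k : ℕ) : S t k ≤ S t (k + 1) := by
  unfold S
  exact Finset.sum_le_sum_of_subset (Finset.range_subset_range.2 (by omega))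

lemma f_eq (t : ℕ → ℕ) (k : ℕ) :
    f t k = (-1 : ℝ) ^ k * (2 : ℝ) ^ (-((S t k : ℤ) + k)) := by
  have h2 : (2 : ℝ) ≠ 0 := two_ne_zero
  rw [f, neg_add, zpow_add₀ h2, zpow_neg (-2 : ℝ), zpow_natCast, neg_pow,
    mul_inv, ← inv_pow, zpow_neg, zpow_natCast]
  norm_num
  ring

lemma abs_f (t : ℕ → ℕ) (k : ℕ) :
    |f t k| = (2 : ℝ) ^ (-((S t k : ℤ) + k)) := by
  rw [f_eq, abs_mul, abs_pow, abs_neg, abs_one, one_pow, one_mul,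
    abs_of_pos (zpow_pos two_pos _)]

lemma summable_f (t : ℕ → ℕ) : Summable (f t) := by
  apply Summable.of_norm_bounded (g := fun k => (2 : ℝ)⁻¹ ^ k)
    (summable_geometric_of_lt_one (by norm_num) (by norm_num))
  intro k
  rw [Real.norm_eq_abs, abs_f]
  calc (2 : ℝ) ^ (-((S t k : ℤ) + k)) ≤ (2 : ℝ) ^ (-(k : ℤ)) := by
        apply zpow_le_zpow_right₀ one_le_two; omega
    _ = (2 : ℝ)⁻¹ ^ k := by rw [zpow_neg, zpow_natCast, inv_pow]
lemma zpow_lt_f (a b : ℤ) (h : a < b) : (2:ℝ)^a < (2:ℝ)^b :=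
  zpow_lt_zpow_right₀ one_lt_two h

lemma zpow_le_f (a b : ℤ) (h : a ≤ b) : (2:ℝ)^a ≤ (2:ℝ)^b :=
  zpow_le_zpow_right₀ one_le_two h

lemma neg_one_pow_even (m : ℕ) : ((-1:ℝ))^(2*m) = 1 := by
  simp [pow_mul]

lemma neg_one_pow_odd (m : ℕ) : ((-1:ℝ))^(2*m+1) = -1 := by
  simp [pow_succ, pow_mul]

lemma pair_pos (t : ℕ → ℕ) (m : ℕ) : 0 < f t (2*m) + f t (2*m+1) := by
  rw [f_eq, f_eq, neg_one_pow_even, neg_one_pow_odd, one_mul, neg_one_mul]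
  have hS := S_mono t (2*m)
  have hlt : (2:ℝ)^(-((S t (2*m+1):ℤ)+((2*m+1:ℕ):ℤ))) <
      (2:ℝ)^(-((S t (2*m):ℤ)+((2*m:ℕ):ℤ))) := by
    apply zpow_lt_f; push_cast; omega
  linarith

lemma pair_neg (t : ℕ → ℕ) (m : ℕ) : f t (2*m+1) + f t (2*m+2) < 0 := by
  have e1 : (fun k => f t k) (2*m+2) = f t (2*(m+1)) := rfl
  rw [f_eq, show (2*m+2 : ℕ) = 2*(m+1) from rfl, f_eq, neg_one_pow_even,
    neg_one_pow_odd, one_mul, neg_one_mul]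
  have hS := S_mono t (2*m+1)
  have hlt : (2:ℝ)^(-((S t (2*(m+1)):ℤ)+((2*(m+1):ℕ):ℤ))) <
      (2:ℝ)^(-((S t (2*m+1):ℤ)+((2*m+1:ℕ):ℤ))) := by
    apply zpow_lt_f; push_cast
    have : S t (2*m+1) ≤ S t (2*m+1+1) := hS
    have e2 : S t (2*m+1+1) = S t (2*(m+1)) := rfl
    omega
  linarith

lemma summable_even (t : ℕ → ℕ) : Summable (fun m => f t (2*m)) :=
  (summable_f t).comp_injective (i := fun m : ℕ => 2*m) (fun a b h => by dsimp at h; omega)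

lemma summable_odd (t : ℕ → ℕ) : Summable (fun m => f t (2*m+1)) :=
  (summable_f t).comp_injective (i := fun m : ℕ => 2*m+1) (fun a b h => by dsimp at h; omega)

lemma summable_odd' (t : ℕ → ℕ) : Summable (fun m => f t (2*m+2)) :=
  (summable_f t).comp_injective (i := fun m : ℕ => 2*m+2) (fun a b h => by dsimp at h; omega)

lemma summable_shift (t : ℕ → ℕ) (c : ℕ) : Summable (fun k => f t (k + c)) :=
  (summable_f t).comp_injective (i := fun m : ℕ => m + c) (fun a b h => by dsimp at h; omega)

lemma S_zero (t : ℕ → ℕ) : S t 0 = t 0 := by simp [S]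

lemma f_zero (t : ℕ → ℕ) : f t 0 = (2:ℝ) ^ (-(t 0 : ℤ)) := by
  rw [f_eq]; simp [S_zero]

lemma f_one (t : ℕ → ℕ) : f t 1 = -(2:ℝ) ^ (-(S t 1 : ℤ) - 1) := by
  rw [f_eq]
  have : -((S t 1 : ℤ) + ((1:ℕ):ℤ)) = -(S t 1 : ℤ) - 1 := by push_cast; ring
  rw [this]; ring

lemma t0_le_S1 (t : ℕ → ℕ) : t 0 ≤ S t 1 := by
  have := S_mono t 0; rwa [S_zero] at this

lemma two_zpow_expand (a : ℤ) : (2:ℝ)^a = (2:ℝ)^(a-1) + (2:ℝ)^(a-1) := by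
  have : a = (a - 1) + 1 := by ring
  rw [this, zpow_add_one₀ (two_ne_zero)]; ring_nf

lemma induced_lb (t : ℕ → ℕ) : (2:ℝ) ^ (-(t 0 : ℤ) - 1) < inducedPoint t := by
  have hP : Summable (fun m => f t (2*m) + f t (2*m+1)) :=
    (summable_even t).add (summable_odd t)
  have heq : inducedPoint t = ∑' m, (f t (2*m) + f t (2*m+1)) := by
    rw [inducedPoint_eq, ← tsum_even_add_odd (summable_even t) (summable_odd t),
      Summable.tsum_add (summable_even t) (summable_odd t)]
  have h2 : (f t (2*0) + f t (2*0+1)) + (f t (2*1) + f t (2*1+1)) ≤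
      ∑' m, (f t (2*m) + f t (2*m+1)) := by
    have := Summable.sum_le_tsum (Finset.range 2) (fun i _ => (pair_pos t i).le) hP
    rwa [Finset.sum_range_succ, Finset.sum_range_one] at this
  have hp1 := pair_pos t 1
  have hP0 : (2:ℝ) ^ (-(t 0 : ℤ) - 1) ≤ f t (2*0) + f t (2*0+1) := by
    rw [show (2*0 : ℕ) = 0 from rfl, show (2*0+1 : ℕ) = 1 from rfl, f_zero, f_one]
    have key : (2:ℝ) ^ (-(S t 1 : ℤ) - 1) ≤ (2:ℝ) ^ (-(t 0 : ℤ) - 1) := by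
      apply zpow_le_f; have := t0_le_S1 t; omega
    have expand := two_zpow_expand (-(t 0 : ℤ))
    have e : -(t 0:ℤ) - 1 = -(t 0:ℤ) - 1 := rfl
    linarith [expand]
  rw [heq]; linarith

lemma induced_ub (t : ℕ → ℕ) : inducedPoint t < (2:ℝ) ^ (-(t 0 : ℤ)) := by
  have hs1 : Summable (fun k => f t (k + 1)) := summable_shift t 1
  have heq : inducedPoint t = f t 0 + ∑' k, f t (k + 1) := by
    rw [inducedPoint_eq]; exact tsum_eq_zero_add' hs1
  have hse : Summable (fun m => f t (2*m+1)) := summable_odd t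
  have hso : Summable (fun m => f t (2*m+2)) := summable_odd' t
  have heo : ∑' k, f t (k+1) = ∑' m, (f t (2*m+1) + f t (2*m+2)) := by
    have h1 := tsum_even_add_odd (f := fun k => f t (k+1)) hse hso
    rw [← h1, Summable.tsum_add hse hso]
  have hQ : Summable (fun m => f t (2*m+1) + f t (2*m+2)) := hse.add hso
  have hQ1 : Summable (fun m : ℕ => f t (2*(m+1)+1) + f t (2*(m+1)+2)) :=
    hQ.comp_injective (i := fun m : ℕ => m + 1) (fun a b h => by dsimp at h; omega)
  have hQle : ∑' m, (f t (2*m+1) + f t (2*m+2)) ≤ f t (2*0+1) + f t (2*0+2) := by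
    rw [tsum_eq_zero_add' (f := fun m => f t (2*m+1) + f t (2*m+2)) hQ1]
    have htail : ∑' m, (f t (2*(m+1)+1) + f t (2*(m+1)+2)) ≤ 0 :=
      tsum_nonpos (fun m => (pair_neg t (m+1)).le)
    linarith
  have hq0 : f t (2*0+1) + f t (2*0+2) < 0 := pair_neg t 0
  rw [heq, heo, ← f_zero t]
  linarith

lemma S_succ (t : ℕ → ℕ) (k : ℕ) : S t (k+1) = t 0 + S (fun j => t (j+1)) k := by
  unfold S
  rw [Finset.sum_range_succ' (fun j => t j) (k+1)]
  ring

lemma f_succ (t : ℕ → ℕ) (k : ℕ) :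
    f t (k+1) = -(2:ℝ)^(-(t 0:ℤ)-1) * f (fun j => t (j+1)) k := by
  rw [f_eq, f_eq]
  have h := S_succ t k
  have e : -((S t (k+1) : ℤ) + ((k+1:ℕ):ℤ)) =
      (-(t 0:ℤ)-1) + (-((S (fun j => t (j+1)) k : ℤ) + ((k:ℕ):ℤ))) := by
    push_cast; omega
  rw [e, zpow_add₀ (two_ne_zero), pow_succ]
  ring

lemma shift_eq (t : ℕ → ℕ) :
    inducedPoint t = (2:ℝ)^(-(t 0:ℤ)) -
      (2:ℝ)^(-(t 0:ℤ)-1) * inducedPoint (fun k => t (k+1)) := by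
  rw [inducedPoint_eq, tsum_eq_zero_add' (f := f t) (summable_shift t 1), f_zero]
  have h1 : ∑' k, f t (k+1) =
      ∑' k, (-(2:ℝ)^(-(t 0:ℤ)-1) * f (fun j => t (j+1)) k) := tsum_congr (f_succ t)
  rw [h1, tsum_mul_left, inducedPoint_eq]
  ring

lemma mem_return (t : ℕ → ℕ) : inducedPoint t ∈ returnInterval (t 0) :=
  ⟨induced_lb t, (induced_ub t).le⟩

lemma tent_of_le_half {x : ℝ} (h : x ≤ 1/2) : tentMap x = 2 * x := by
  unfold tentMap; rw [abs_of_nonneg (by linarith)]; ring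

lemma tent_of_ge_half {x : ℝ} (h : 1/2 ≤ x) : tentMap x = 2 - 2 * x := by
  unfold tentMap; rw [abs_of_nonpos (by linarith)]; ring

lemma two_zpow_le_one (n : ℕ) : (2:ℝ)^(-(n:ℤ)) ≤ 1 := by
  have := zpow_le_f (-(n:ℤ)) 0 (by omega); simpa using this

lemma tent_iter (n : ℕ) : ∀ x : ℝ, 0 ≤ x → x ≤ (2:ℝ)^(-(n:ℤ)) →
    tentMap^[n] x = 2^n * x := by
  induction n with
  | zero => intro x _ _; simp
  | succ n ih =>
    intro x hx0 hx
    have hb : (2:ℝ)^(-((n+1:ℕ):ℤ)) ≤ (2:ℝ)^(-1:ℤ) := zpow_le_f _ _ (by push_cast; omega)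
    have h1 : ((2:ℝ)^(-1:ℤ)) = 1/2 := by norm_num
    have hhalf : x ≤ 1/2 := by rw [h1] at hb; linarith
    rw [Function.iterate_succ_apply, tent_of_le_half hhalf]
    have hpow : (2:ℝ)^(-(n:ℤ)) = (2:ℝ)^(-((n+1:ℕ):ℤ)) * 2 := by
      rw [show -(n:ℤ) = (-((n+1:ℕ):ℤ)) + 1 by push_cast; ring,
        zpow_add_one₀ (two_ne_zero : (2:ℝ) ≠ 0)]
    have h2x : 2*x ≤ (2:ℝ)^(-(n:ℤ)) := by rw [hpow]; linarith
    rw [ih (2*x) (by linarith) h2x]; ring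

lemma tent_iter_return {n : ℕ} {x : ℝ} (hx : x ∈ returnInterval n) :
    tentMap^[n+1] x = 2 - 2^(n+1) * x := by
  obtain ⟨h1, h2⟩ := hx
  have hpos : (0:ℝ) < (2:ℝ)^(-(n:ℤ)-1) := zpow_pos two_pos _
  have hx0 : 0 < x := lt_trans hpos h1
  rw [Function.iterate_succ_apply', tent_iter n x hx0.le h2]
  have hkey : (2:ℝ)^n * (2:ℝ)^(-(n:ℤ)-1) = 1/2 := by
    rw [← zpow_natCast (2:ℝ) n, ← zpow_add₀ (two_ne_zero),
      show (n:ℤ) + (-(n:ℤ)-1) = -1 by ring]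
    norm_num
  have hge : 1/2 < (2:ℝ)^n * x := by
    calc (1:ℝ)/2 = 2^n * (2:ℝ)^(-(n:ℤ)-1) := hkey.symm
      _ < 2^n * x := by
          exact mul_lt_mul_of_pos_left h1 (pow_pos two_pos n)
  rw [tent_of_ge_half hge.le, pow_succ]
  ring

lemma psi_return (ψ : ℝ → ℝ)
    (hψ : ∀ (n : ℕ), ∀ x ∈ returnInterval n, ψ x = tentMap^[n + 1] x)
    {n : ℕ} {x : ℝ} (hx : x ∈ returnInterval n) : ψ x = 2 - 2^(n+1) * x := by
  rw [hψ n x hx, tent_iter_return hx]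

lemma psi_induced (ψ : ℝ → ℝ)
    (hψ : ∀ (n : ℕ), ∀ x ∈ returnInterval n, ψ x = tentMap^[n + 1] x)
    (t : ℕ → ℕ) : ψ (inducedPoint t) = inducedPoint (fun k => t (k+1)) := by
  rw [psi_return ψ hψ (mem_return t), shift_eq t]
  have h1 : (2:ℝ)^(t 0+1) * (2:ℝ)^(-(t 0:ℤ)) = 2 := by
    rw [← zpow_natCast (2:ℝ) (t 0+1), ← zpow_add₀ (two_ne_zero),
      show ((t 0+1:ℕ):ℤ) + (-(t 0:ℤ)) = 1 by push_cast; ring]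
    norm_num
  have h2 : (2:ℝ)^(t 0+1) * ((2:ℝ)^(-(t 0:ℤ)-1)) = 1 := by
    rw [← zpow_natCast (2:ℝ) (t 0+1), ← zpow_add₀ (two_ne_zero),
      show ((t 0+1:ℕ):ℤ) + (-(t 0:ℤ)-1) = 0 by push_cast; ring]
    norm_num
  linear_combination (-1 : ℝ) * h1 + inducedPoint (fun k => t (k+1)) * h2

lemma return_subset (n : ℕ) : returnInterval n ⊆ Set.Ioc 0 1 := by
  rintro x ⟨h1, h2⟩
  exact ⟨lt_trans (zpow_pos two_pos _) h1, le_trans h2 (two_zpow_le_one n)⟩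

lemma psi_expand (ψ : ℝ → ℝ)
    (hψ : ∀ (n : ℕ), ∀ x ∈ returnInterval n, ψ x = tentMap^[n + 1] x)
    {n : ℕ} {x y : ℝ} (hx : x ∈ returnInterval n) (hy : y ∈ returnInterval n) :
    2 * |x - y| ≤ |ψ x - ψ y| := by
  rw [psi_return ψ hψ hx, psi_return ψ hψ hy,
    show (2 - 2^(n+1)*x) - (2 - 2^(n+1)*y) = 2^(n+1) * (y - x) by ring,
    abs_mul, abs_of_pos (show (0:ℝ) < 2^(n+1) by positivity), abs_sub_comm x y]
  have h2 : (2:ℝ) ≤ 2^(n+1) := by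
    calc (2:ℝ) = 2^1 := (pow_one 2).symm
      _ ≤ 2^(n+1) := pow_le_pow_right₀ one_le_two (by omega)
  exact mul_le_mul_of_nonneg_right h2 (abs_nonneg _)

lemma itinerary_unique (ψ : ℝ → ℝ)
    (hψ : ∀ (n : ℕ), ∀ x ∈ returnInterval n, ψ x = tentMap^[n + 1] x)
    (t : ℕ → ℕ) {x y : ℝ}
    (hx : ∀ k, ψ^[k] x ∈ returnInterval (t k))
    (hy : ∀ k, ψ^[k] y ∈ returnInterval (t k)) : x = y := by
  have key : ∀ k, 2^k * |x - y| ≤ |ψ^[k] x - ψ^[k] y| := by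
    intro k; induction k with
    | zero => simp
    | succ k ih =>
      rw [Function.iterate_succ_apply', Function.iterate_succ_apply']
      calc (2:ℝ)^(k+1) * |x-y| = 2 * (2^k * |x-y|) := by ring
        _ ≤ 2 * |ψ^[k] x - ψ^[k] y| := by linarith
        _ ≤ |ψ (ψ^[k] x) - ψ (ψ^[k] y)| := psi_expand ψ hψ (hx k) (hy k)
  have hb : ∀ k, |ψ^[k] x - ψ^[k] y| ≤ 1 := by
    intro k
    obtain ⟨ha1, ha2⟩ := return_subset _ (hx k)
    obtain ⟨hb1, hb2⟩ := return_subset _ (hy k)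
    rw [abs_sub_le_iff]; constructor <;> linarith
  by_contra hne
  have habs : 0 < |x - y| := abs_pos.2 (sub_ne_zero.2 hne)
  obtain ⟨k, hk⟩ := pow_unbounded_of_one_lt (|x-y|⁻¹) (one_lt_two (α := ℝ))
  have h1 : (2:ℝ)^k * |x-y| ≤ 1 := le_trans (key k) (hb k)
  have h2 : |x-y|⁻¹ * |x-y| < 2^k * |x-y| := mul_lt_mul_of_pos_right hk habs
  rw [inv_mul_cancel₀ (ne_of_gt habs)] at h2
  linarith

lemma iter_induced (ψ : ℝ → ℝ)
    (hψ : ∀ (n : ℕ), ∀ x ∈ returnInterval n, ψ x = tentMap^[n + 1] x)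
    (k : ℕ) : ∀ t : ℕ → ℕ,
    ψ^[k] (inducedPoint t) = inducedPoint (fun j => t (j + k)) := by
  induction k with
  | zero => intro t; rfl
  | succ k ih =>
    intro t
    rw [Function.iterate_succ_apply, psi_induced ψ hψ t, ih (fun j => t (j+1))]
    exact congrArg inducedPoint (funext fun j => congrArg t (by omega))

end TentAux

/-- **Inducing scheme for the tent map.**
Let `ψ` be the induced (first-return type) map of the tent map: `ψ(0) = 0` and
`ψ(x) = φ^{n+1}(x)` for `x ∈ I_n = (2^{−n−1}, 2^{−n}]`.  Then for every itinerary
`t : ℕ → ℕ`: (i) `X(t) ∈ I_{t₀}`; (ii) `ψ(X(t)) = X(σ t)` where `σ` is the left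
shift; (iii) `X(t)` is the unique point whose `ψ`-itinerary is `t`, i.e.
`∩_k ψ^{−k}(I_{t_k}) = {X(t)}`. -/

theorem tent_map_inducing
    (ψ : ℝ → ℝ) (hψ0 : ψ 0 = 0)
    (hψ : ∀ (n : ℕ), ∀ x ∈ returnInterval n, ψ x = tentMap^[n + 1] x)
    (t : ℕ → ℕ) :
    inducedPoint t ∈ returnInterval (t 0)
    ∧ ψ (inducedPoint t) = inducedPoint (fun k => t (k + 1))
    ∧ {x : ℝ | ∀ k : ℕ, ψ^[k] x ∈ returnInterval (t k)} = {inducedPoint t} := by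
  have hXmem : ∀ k : ℕ, ψ^[k] (inducedPoint t) ∈ returnInterval (t k) := by
    intro k
    rw [TentAux.iter_induced ψ hψ k t]
    simpa using TentAux.mem_return (fun j => t (j + k))
  refine ⟨TentAux.mem_return t, TentAux.psi_induced ψ hψ t, ?_⟩
  ext x
  simp only [Set.mem_setOf_eq, Set.mem_singleton_iff]
  constructor
  · intro h
    exact TentAux.itinerary_unique ψ hψ t h hXmem
  · rintro rfl k
    exact hXmem k
end

section
/- Let A be a finite set with N ≥ 2 elements, let P and P̂ be irreducible row-stochastic N×N matrices with matching zero pattern (P_{xy} = 0 ⇔ P̂_{xy} = 0 for all x,y ∈ A), and let p, p̂ be probability vectors on A with strictly positive entries. For α ∈ ℝ define Q(α)_{xy} := P_{xy}^{1−α} P̂_{xy}^{α} (equal to 0 on the common zero pattern), q(α)_x := p_x^{1−α} p̂_x^{α}, and for t ≥ 1 the Rényi entropy e_t(α) := log Σ_{(x_1,…,x_t)∈A^t} (p_{x_1} P_{x_1x_2} ⋯ P_{x_{t−1}x_t})^{1−α} (p̂_{x_1} P̂_{x_1x_2} ⋯ P̂_{x_{t−1}x_t})^{α}. Then e_t(α)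 = log( q(α) Q(α)^{t−1} 𝟙 ) with 𝟙 the all-ones column vector, the matrix Q(α) is irreducible with strictly positive spectral radius r(α), and the entropic pressure exists as a limit: lim_{t→∞} t^{−1} e_t(α) = log r(α). -/
open scoped ENNReal NNReal

section AuxEntropicPressure

variable {A : Type*} [Fintype A] [DecidableEq A]

private lemma epaux_pow_nonneg (M : Matrix A A ℝ) (hM : ∀ x y, 0 ≤ M x y) :
    ∀ k x y, 0 ≤ (M ^ k) x y := by
  intro k
  induction k with
  | zero => intro x y; simp [Matrix.one_apply]; positivity
  | succ k ih =>
    intro x y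
    rw [pow_succ, Matrix.mul_apply]
    exact Finset.sum_nonneg fun z _ => mul_nonneg (ih x z) (hM z y)

private lemma epaux_exists_pos {s : Finset A} {g : A → ℝ}
    (h : 0 < ∑ z ∈ s, g z) : ∃ z ∈ s, 0 < g z := by
  by_contra hc
  push_neg at hc
  exact absurd h (not_lt.mpr (Finset.sum_nonpos hc))

private lemma epaux_pattern (M M' : Matrix A A ℝ) (hM : ∀ x y, 0 ≤ M x y)
    (hM' : ∀ x y, 0 ≤ M' x y) (h : ∀ x y, 0 < M x y → 0 < M' x y) :
    ∀ k x y, 0 < (M ^ k) x y → 0 < (M' ^ k) x y := by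
  intro k
  induction k with
  | zero => intro x y; simp
  | succ k ih =>
    intro x y hk
    rw [pow_succ, Matrix.mul_apply] at hk
    obtain ⟨z, -, hz⟩ := epaux_exists_pos hk
    have h1 : 0 < (M ^ k) x z := lt_of_le_of_ne (epaux_pow_nonneg M hM k x z)
      (by rintro h'; rw [← h'] at hz; simp at hz)
    have h2 : 0 < M z y := lt_of_le_of_ne (hM z y)
      (by rintro h'; rw [← h'] at hz; simp at hz)
    have key : 0 < (M' ^ k) x z * M' z y := mul_pos (ih x z h1) (h z y h2)
    rw [pow_succ, Matrix.mul_apply]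
    refine lt_of_lt_of_le key ?_
    exact Finset.single_le_sum (f := fun z => (M' ^ k) x z * M' z y)
      (fun i _ => mul_nonneg (epaux_pow_nonneg M' hM' k x i) (hM' i y)) (Finset.mem_univ z)

private lemma epaux_key (M : Matrix A A ℝ) :
    ∀ (t : ℕ) (f : A → ℝ),
      ∑ x : Fin (t + 1) → A, f (x 0) * ∏ i : Fin t, M (x i.castSucc) (x i.succ)
        = ∑ a : A, ∑ b : A, f a * (M ^ t) a b := by
  intro t
  induction t with
  | zero =>
    intro f
    simp [Matrix.one_apply]
    exact Fintype.sum_equiv (Equiv.funUnique (Fin 1) A) _ _ (fun x => rfl)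
  | succ t ih =>
    intro f
    have e : ∑ x : Fin (t + 2) → A, f (x 0) * ∏ i : Fin (t + 1), M (x i.castSucc) (x i.succ)
        = ∑ ay : A × (Fin (t + 1) → A),
            f ((Fin.cons ay.1 ay.2 : Fin (t+2) → A) 0) *
              ∏ i : Fin (t + 1), M ((Fin.cons ay.1 ay.2 : Fin (t+2) → A) i.castSucc)
                ((Fin.cons ay.1 ay.2 : Fin (t+2) → A) i.succ) :=
      (Fintype.sum_equiv (Fin.consEquiv (fun _ : Fin (t + 2) => A))
        (fun ay => f ((Fin.cons ay.1 ay.2 : Fin (t+2) → A) 0) *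
          ∏ i : Fin (t + 1), M ((Fin.cons ay.1 ay.2 : Fin (t+2) → A) i.castSucc)
            ((Fin.cons ay.1 ay.2 : Fin (t+2) → A) i.succ))
        (fun x => f (x 0) * ∏ i : Fin (t + 1), M (x i.castSucc) (x i.succ))
        (fun ay => rfl)).symm
    have e2 : ∀ (a : A) (y : Fin (t + 1) → A),
        (∏ i : Fin (t + 1), M ((Fin.cons a y : Fin (t+2) → A) i.castSucc)
          ((Fin.cons a y : Fin (t+2) → A) i.succ))
        = M a (y 0) * ∏ i : Fin t, M (y i.castSucc) (y i.succ) := by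
      intro a y
      have hterm : ∀ j : Fin t,
          M ((Fin.cons a y : Fin (t+2) → A) (j.succ).castSucc)
            ((Fin.cons a y : Fin (t+2) → A) (j.succ).succ)
          = M (y j.castSucc) (y j.succ) := by
        intro j
        rw [← Fin.succ_castSucc, Fin.cons_succ, Fin.cons_succ]
      rw [Fin.prod_univ_succ, Fin.castSucc_zero, Fin.cons_zero, Fin.cons_succ]
      first
      | rfl
      | (congr 1
         exact Finset.prod_congr rfl fun j _ => hterm j)
    rw [e, Fintype.sum_prod_type]
    have e3 : ∀ ay : A × (Fin (t+1) → A), ((Fin.cons ay.1 ay.2 : Fin (t+2) → A) 0) = ay.1 :=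
      fun ay => Fin.cons_zero _ _
    calc ∑ a : A, ∑ y : Fin (t + 1) → A,
          f ((Fin.cons a y : Fin (t+2) → A) 0) *
            ∏ i : Fin (t + 1), M ((Fin.cons a y : Fin (t+2) → A) i.castSucc)
              ((Fin.cons a y : Fin (t+2) → A) i.succ)
        = ∑ y : Fin (t + 1) → A, (∑ a : A, f a * M a (y 0)) *
            ∏ i : Fin t, M (y i.castSucc) (y i.succ) := by
          rw [Finset.sum_comm]
          apply Finset.sum_congr rfl; intro y _
          rw [Finset.sum_mul]
          apply Finset.sum_congr rfl; intro a _
          rw [e3 (a, y), e2 a y]; ring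
      _ = ∑ a : A, ∑ b : A, (∑ c : A, f c * M c a) * (M ^ t) a b := by
          simpa using ih (fun c => ∑ a : A, f a * M a c)
      _ = ∑ a : A, ∑ b : A, ∑ c : A, f c * M c a * (M ^ t) a b := by
          simp_rw [Finset.sum_mul]
      _ = ∑ c : A, ∑ b : A, ∑ a : A, f c * M c a * (M ^ t) a b := by
          calc ∑ a : A, ∑ b : A, ∑ c : A, f c * M c a * (M ^ t) a b
              = ∑ b : A, ∑ a : A, ∑ c : A, f c * M c a * (M ^ t) a b := Finset.sum_comm
            _ = ∑ b : A, ∑ c : A, ∑ a : A, f c * M c a * (M ^ t) a b :=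
                Finset.sum_congr rfl fun b _ => Finset.sum_comm
            _ = ∑ c : A, ∑ b : A, ∑ a : A, f c * M c a * (M ^ t) a b := Finset.sum_comm
      _ = ∑ a : A, ∑ b : A, f a * (M ^ (t+1)) a b := by
          apply Finset.sum_congr rfl; intro c _
          apply Finset.sum_congr rfl; intro b _
          rw [pow_succ', Matrix.mul_apply, Finset.mul_sum]
          apply Finset.sum_congr rfl; intro a _
          ring

attribute [local instance] Matrix.linftyOpNormedRing Matrix.linftyOpNormedAlgebra

private lemma epaux_rowsum_le_norm (N : Matrix A A ℝ) (hN : ∀ x y, 0 ≤ N x y) (x : A) :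
    ∑ y, N x y ≤ ‖N‖ := by
  rw [Matrix.linfty_opNorm_def]
  have h1 : (∑ y, ‖N x y‖₊ : ℝ≥0) ≤ Finset.univ.sup fun i => ∑ j, ‖N i j‖₊ :=
    Finset.le_sup (f := fun i => ∑ j, ‖N i j‖₊) (Finset.mem_univ x)
  calc ∑ y, N x y = ((∑ y, ‖N x y‖₊ : ℝ≥0) : ℝ) := by
        push_cast
        exact Finset.sum_congr rfl fun y _ => (Real.norm_of_nonneg (hN x y)).symm
    _ ≤ _ := by exact_mod_cast h1

private lemma epaux_norm_le_total (N : Matrix A A ℝ) (hN : ∀ x y, 0 ≤ N x y) :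
    ‖N‖ ≤ ∑ x, ∑ y, N x y := by
  rw [Matrix.linfty_opNorm_def]
  have h1 : (Finset.univ.sup fun i => ∑ j, ‖N i j‖₊ : ℝ≥0) ≤ ∑ i, ∑ j, ‖N i j‖₊ :=
    Finset.sup_le fun i _ => Finset.single_le_sum (f := fun i => ∑ j, ‖N i j‖₊)
      (fun _ _ => zero_le) (Finset.mem_univ i)
  calc ((Finset.univ.sup fun i => ∑ j, ‖N i j‖₊ : ℝ≥0) : ℝ)
      ≤ ((∑ i, ∑ j, ‖N i j‖₊ : ℝ≥0) : ℝ) := by exact_mod_cast h1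
    _ = ∑ x, ∑ y, N x y := by
        push_cast
        exact Finset.sum_congr rfl fun x _ => Finset.sum_congr rfl
          fun y _ => Real.norm_of_nonneg (hN x y)

private lemma epaux_entry_le_norm (N : Matrix A A ℝ) (hN : ∀ x y, 0 ≤ N x y) (x y : A) :
    N x y ≤ ‖N‖ :=
  le_trans (Finset.single_le_sum (f := fun y => N x y) (fun i _ => hN x i)
    (Finset.mem_univ y)) (epaux_rowsum_le_norm N hN x)

private lemma epaux_norm_map (N : Matrix A A ℝ) : ‖N.map (Complex.ofReal ·)‖ = ‖N‖ := by
  rw [Matrix.linfty_opNorm_def, Matrix.linfty_opNorm_def]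
  congr 1
  apply Finset.sup_congr rfl
  intro x _
  exact Finset.sum_congr rfl fun y _ => Complex.nnnorm_real _

private lemma epaux_map_pow (N : Matrix A A ℝ) (t : ℕ) :
    (N.map (Complex.ofReal ·))^t = (N^t).map (Complex.ofReal ·) := by
  have : N.map (Complex.ofReal ·) = Complex.ofRealHom.mapMatrix N := rfl
  rw [this, ← map_pow]; rfl

private lemma epaux_diag_pow_ge (M : Matrix A A ℝ) (hM : ∀ x y, 0 ≤ M x y) (x0 : A) (k : ℕ) :
    ∀ m : ℕ, ((M ^ k) x0 x0) ^ m ≤ (M ^ (k * m)) x0 x0 := by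
  intro m
  induction m with
  | zero => simp [Matrix.one_apply]
  | succ m ih =>
    have h1 : (M ^ (k * (m+1))) x0 x0 = ∑ z, (M ^ (k*m)) x0 z * (M ^ k) z x0 := by
      rw [show k * (m+1) = k * m + k by ring, pow_add, Matrix.mul_apply]
    rw [h1]
    calc ((M ^ k) x0 x0) ^ (m+1) = ((M ^ k) x0 x0) ^ m * (M ^ k) x0 x0 := pow_succ _ _
      _ ≤ (M ^ (k*m)) x0 x0 * (M ^ k) x0 x0 :=
          mul_le_mul_of_nonneg_right ih (epaux_pow_nonneg M hM k x0 x0)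
      _ ≤ ∑ z, (M ^ (k*m)) x0 z * (M ^ k) z x0 :=
          Finset.single_le_sum (f := fun z => (M ^ (k*m)) x0 z * (M ^ k) z x0)
            (fun z _ => mul_nonneg (epaux_pow_nonneg M hM _ x0 z)
              (epaux_pow_nonneg M hM k z x0)) (Finset.mem_univ x0)

private lemma epaux_pow_exists_pos [Nonempty A] (M : Matrix A A ℝ) (hM : ∀ x y, 0 ≤ M x y)
    (hrow : ∀ x, ∃ y, 0 < M x y) : ∀ t, ∃ x y, 0 < (M ^ t) x y := by
  intro t
  induction t with
  | zero =>
    obtain ⟨x⟩ := (inferInstance : Nonempty A)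
    exact ⟨x, x, by simp⟩
  | succ t ih =>
    obtain ⟨x, y, hxy⟩ := ih
    obtain ⟨z, hz⟩ := hrow y
    refine ⟨x, z, ?_⟩
    rw [pow_succ, Matrix.mul_apply]
    refine lt_of_lt_of_le (mul_pos hxy hz) ?_
    exact Finset.single_le_sum (f := fun w => (M ^ t) x w * M w z)
      (fun w _ => mul_nonneg (epaux_pow_nonneg M hM t x w) (hM w z)) (Finset.mem_univ y)

private lemma epaux_pressure [Nonempty A] (M : Matrix A A ℝ) (hM : ∀ x y, 0 ≤ M x y)
    (hirr : ∀ x y, ∃ k : ℕ, 1 ≤ k ∧ 0 < (M ^ k) x y)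
    (hrow : ∀ x, ∃ y, 0 < M x y)
    (v : A → ℝ) (hv : ∀ x, 0 < v x) :
    ∃ r : ℝ, 0 < r
      ∧ spectralRadius ℂ (M.map (Complex.ofReal ·)) = ENNReal.ofReal r
      ∧ Filter.Tendsto (fun t : ℕ => ((t : ℝ) + 1)⁻¹ *
          Real.log (∑ x : A, ∑ y : A, v x * (M ^ t) x y))
          Filter.atTop (nhds (Real.log r)) := by
  classical
  set u : ℕ → ℝ := fun t => ‖M ^ t‖ with hu
  set s : ℕ → ℝ := fun t => ∑ x : A, ∑ y : A, v x * (M ^ t) x y with hs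
  -- positivity of u and s
  have hu_pos : ∀ t, 0 < u t := by
    intro t
    obtain ⟨x, y, hxy⟩ := epaux_pow_exists_pos M hM hrow t
    exact lt_of_lt_of_le hxy (epaux_entry_le_norm _ (epaux_pow_nonneg M hM t) x y)
  have hs_le : ∀ t, s t ≤ (∑ x, v x) * u t := by
    intro t
    rw [hs, Finset.sum_mul]
    refine Finset.sum_le_sum fun x _ => ?_
    rw [← Finset.mul_sum]
    exact mul_le_mul_of_nonneg_left
      (epaux_rowsum_le_norm _ (epaux_pow_nonneg M hM t) x) (hv x).le
  -- lower bound with minimum of v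
  obtain ⟨x₁⟩ := (inferInstance : Nonempty A)
  set c : ℝ := Finset.univ.inf' ⟨x₁, Finset.mem_univ x₁⟩ v with hc
  have hc_pos : 0 < c := by
    obtain ⟨x, -, hx⟩ := Finset.exists_mem_eq_inf' ⟨x₁, Finset.mem_univ x₁⟩ v
    rw [hc, hx]; exact hv x
  have hc_le : ∀ x : A, c ≤ v x := fun x => Finset.inf'_le v (Finset.mem_univ x)
  have hs_ge : ∀ t, c * u t ≤ s t := by
    intro t
    have h1 : c * u t ≤ c * ∑ x, ∑ y, (M ^ t) x y :=
      mul_le_mul_of_nonneg_left (epaux_norm_le_total _ (epaux_pow_nonneg M hM t)) hc_pos.le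
    refine le_trans h1 ?_
    rw [Finset.mul_sum]
    refine Finset.sum_le_sum fun x _ => ?_
    have hx : c * ∑ y, (M ^ t) x y ≤ v x * ∑ y, (M ^ t) x y :=
      mul_le_mul_of_nonneg_right (hc_le x)
        (Finset.sum_nonneg fun y _ => epaux_pow_nonneg M hM t x y)
    exact le_trans hx (le_of_eq (Finset.mul_sum _ _ _))
  have hs_pos : ∀ t, 0 < s t := fun t => lt_of_lt_of_le (mul_pos hc_pos (hu_pos t)) (hs_ge t)
  have hC_pos : 0 < ∑ x, v x := Finset.sum_pos (fun x _ => hv x) ⟨x₁, Finset.mem_univ x₁⟩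
  -- Gelfand
  set L : ℝ≥0∞ := spectralRadius ℂ (M.map (Complex.ofReal ·)) with hL
  have hG : Filter.Tendsto (fun n : ℕ => ENNReal.ofReal (u n ^ (1/n : ℝ)))
      Filter.atTop (nhds L) := by
    have := spectrum.pow_norm_pow_one_div_tendsto_nhds_spectralRadius
      (M.map (Complex.ofReal ·))
    refine this.congr fun n => ?_
    rw [epaux_map_pow, epaux_norm_map]
  have hLne : L ≠ ⊤ := by
    refine ne_top_of_le_ne_top ENNReal.coe_ne_top
      (spectrum.spectralRadius_le_nnnorm (𝕜 := ℂ) (a := M.map (Complex.ofReal ·)))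
  have hLpos : 0 < L := by
    obtain ⟨k, hk1, hδ⟩ := hirr x₁ x₁
    set δ : ℝ := (M ^ k) x₁ x₁ with hδdef
    have hδk : (0:ℝ) < δ ^ ((1:ℝ)/k) := Real.rpow_pos_of_pos hδ _
    have hsub : Filter.Tendsto (fun m : ℕ => k * m) Filter.atTop Filter.atTop := by
      refine Filter.tendsto_atTop_mono (fun m => ?_) Filter.tendsto_id
      calc m = 1 * m := (one_mul m).symm
        _ ≤ k * m := Nat.mul_le_mul_right m hk1
    have hcomp := hG.comp hsub
    have hev : ∀ᶠ m : ℕ in Filter.atTop,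
        ENNReal.ofReal (δ ^ ((1:ℝ)/k)) ≤ ENNReal.ofReal (u (k * m) ^ (1/(k*m : ℕ) : ℝ)) := by
      filter_upwards [Filter.eventually_ge_atTop 1] with m hm
      refine ENNReal.ofReal_le_ofReal ?_
      have hkm : 0 < k * m := Nat.mul_pos hk1 hm
      have h1 : δ ^ m ≤ (M ^ (k * m)) x₁ x₁ := epaux_diag_pow_ge M hM x₁ k m
      have h2 : (M ^ (k * m)) x₁ x₁ ≤ u (k * m) :=
        epaux_entry_le_norm _ (epaux_pow_nonneg M hM _) x₁ x₁
      have h3 : (0:ℝ) < δ ^ m := pow_pos hδ m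
      have h4 : (δ ^ m : ℝ) ^ (1/(k*m : ℕ) : ℝ) ≤ u (k * m) ^ (1/(k*m : ℕ) : ℝ) :=
        Real.rpow_le_rpow h3.le (le_trans h1 h2) (by positivity)
      refine le_trans (le_of_eq ?_) h4
      rw [← Real.rpow_natCast δ m, ← Real.rpow_mul hδ.le]
      congr 1
      have hk0 : (k:ℝ) ≠ 0 := Nat.cast_ne_zero.mpr (by omega)
      have hm0 : (m:ℝ) ≠ 0 := Nat.cast_ne_zero.mpr (by omega)
      push_cast
      field_simp
      try ring
    have hge : ENNReal.ofReal (δ ^ ((1:ℝ)/k)) ≤ L := ge_of_tendsto hcomp hev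
    exact lt_of_lt_of_le (by simpa using ENNReal.ofReal_pos.mpr hδk) hge
  -- real convergence of u n ^ (1/n)
  set r : ℝ := L.toReal with hr
  have hr_pos : 0 < r := ENNReal.toReal_pos hLpos.ne' hLne
  have hLr : L = ENNReal.ofReal r := (ENNReal.ofReal_toReal hLne).symm
  have hvlim : Filter.Tendsto (fun n : ℕ => u n ^ (1/n : ℝ)) Filter.atTop (nhds r) := by
    have h1 := (ENNReal.tendsto_toReal hLne).comp hG
    refine h1.congr fun n => ?_
    exact ENNReal.toReal_ofReal (Real.rpow_nonneg (norm_nonneg _) _)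
  have hloglim : Filter.Tendsto (fun n : ℕ => (1/n : ℝ) * Real.log (u n))
      Filter.atTop (nhds (Real.log r)) := by
    have h1 := ((Real.continuousAt_log hr_pos.ne').tendsto).comp hvlim
    refine h1.congr fun n => ?_
    exact Real.log_rpow (hu_pos n) _
  -- convergence with (t+1)⁻¹ weights
  have htq : Filter.Tendsto (fun t : ℕ => (t : ℝ) / ((t : ℝ) + 1)) Filter.atTop (nhds 1) :=
    tendsto_natCast_div_add_atTop (1 : ℝ)
  have h1 : Filter.Tendsto (fun t : ℕ => ((t : ℝ) + 1)⁻¹ * Real.log (u t))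
      Filter.atTop (nhds (Real.log r)) := by
    have h2 := htq.mul hloglim
    rw [one_mul] at h2
    refine h2.congr' ?_
    filter_upwards [Filter.eventually_ge_atTop 1] with t ht
    have ht0 : (t:ℝ) ≠ 0 := Nat.cast_ne_zero.mpr (by omega)
    have ht1 : (t:ℝ) + 1 ≠ 0 := by positivity
    field_simp
  have hzero' : Filter.Tendsto (fun t : ℕ => ((t : ℝ) + 1)⁻¹) Filter.atTop (nhds 0) := by
    have : Filter.Tendsto (fun n : ℕ => 1 / ((n : ℝ) + 1)) Filter.atTop (nhds 0) :=
      tendsto_one_div_add_atTop_nhds_zero_nat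
    refine this.congr fun t => ?_
    rw [one_div]
  -- squeeze
  refine ⟨r, hr_pos, hLr ▸ rfl, ?_⟩
  have hlower : Filter.Tendsto
      (fun t : ℕ => ((t : ℝ) + 1)⁻¹ * Real.log c + ((t : ℝ) + 1)⁻¹ * Real.log (u t))
      Filter.atTop (nhds (Real.log r)) := by
    have := (hzero'.mul_const (Real.log c)).add h1
    simpa using this
  have hupper : Filter.Tendsto
      (fun t : ℕ => ((t : ℝ) + 1)⁻¹ * Real.log (∑ x, v x) + ((t : ℝ) + 1)⁻¹ * Real.log (u t))
      Filter.atTop (nhds (Real.log r)) := by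
    have := (hzero'.mul_const (Real.log (∑ x, v x))).add h1
    simpa using this
  refine tendsto_of_tendsto_of_tendsto_of_le_of_le' hlower hupper ?_ ?_
  · refine Filter.Eventually.of_forall fun t => ?_
    have hcu : Real.log c + Real.log (u t) ≤ Real.log (s t) := by
      rw [← Real.log_mul hc_pos.ne' (hu_pos t).ne']
      exact (Real.log_le_log_iff (mul_pos hc_pos (hu_pos t)) (hs_pos t)).mpr (hs_ge t)
    calc ((t : ℝ) + 1)⁻¹ * Real.log c + ((t : ℝ) + 1)⁻¹ * Real.log (u t)
        = ((t : ℝ) + 1)⁻¹ * (Real.log c + Real.log (u t)) := by ring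
      _ ≤ ((t : ℝ) + 1)⁻¹ * Real.log (s t) :=
          mul_le_mul_of_nonneg_left hcu (by positivity)
  · refine Filter.Eventually.of_forall fun t => ?_
    have hcu : Real.log (s t) ≤ Real.log (∑ x, v x) + Real.log (u t) := by
      rw [← Real.log_mul hC_pos.ne' (hu_pos t).ne']
      exact (Real.log_le_log_iff (hs_pos t) (mul_pos hC_pos (hu_pos t))).mpr (hs_le t)
    calc ((t : ℝ) + 1)⁻¹ * Real.log (s t)
        ≤ ((t : ℝ) + 1)⁻¹ * (Real.log (∑ x, v x) + Real.log (u t)) :=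
          mul_le_mul_of_nonneg_left hcu (by positivity)
      _ = _ := by ring

end AuxEntropicPressure


/-- **Entropic pressure of a pair of finite-state Markov chains.**
Let `A` be a finite set with at least 2 elements, `P`, `P̂` irreducible row-stochastic
matrices with matching zero pattern, and `p`, `p̂` strictly positive probability
vectors.  For `α ∈ ℝ` set `Q(α)_{xy} = P_{xy}^{1−α} P̂_{xy}^{α}`,
`q(α)_x = p_x^{1−α} p̂_x^{α}`, and let `e_t(α)` be the Rényi relative `α`-entropy of
the `t`-step path measures (here paths of length `t+1`, i.e. `t` transitions).
Then `e_t(α) = log (q(α) Q(α)^t 𝟙)`, the matrix `Q(α)` is irreducible, and its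
spectral radius `r(α)` (the maximal modulus of its complex eigenvalues) is strictly
positive, with `lim_t t⁻¹ e_t(α) = log r(α)`. -/
theorem markov_chain_entropic_pressure
    {A : Type*} [Fintype A] [DecidableEq A] (hcard : 2 ≤ Fintype.card A)
    (P Phat : Matrix A A ℝ)
    (hPnonneg : ∀ x y, 0 ≤ P x y) (hProw : ∀ x, ∑ y, P x y = 1)
    (hPhatnonneg : ∀ x y, 0 ≤ Phat x y) (hPhatrow : ∀ x, ∑ y, Phat x y = 1)
    (hPirr : ∀ x y, ∃ k : ℕ, 1 ≤ k ∧ 0 < (P ^ k) x y)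
    (hPhatirr : ∀ x y, ∃ k : ℕ, 1 ≤ k ∧ 0 < (Phat ^ k) x y)
    (hzero : ∀ x y, P x y = 0 ↔ Phat x y = 0)
    (p phat : A → ℝ)
    (hppos : ∀ x, 0 < p x) (hpsum : ∑ x, p x = 1)
    (hphatpos : ∀ x, 0 < phat x) (hphatsum : ∑ x, phat x = 1)
    (Q : ℝ → Matrix A A ℝ)
    (hQ : ∀ α x y, Q α x y = P x y ^ (1 - α) * Phat x y ^ α)
    (q : ℝ → A → ℝ)
    (hq : ∀ α x, q α x = p x ^ (1 - α) * phat x ^ α)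
    (et : ℝ → ℕ → ℝ)
    (het : ∀ α t, et α t = Real.log (∑ x : Fin (t + 1) → A,
        (p (x 0) * ∏ i : Fin t, P (x i.castSucc) (x i.succ)) ^ (1 - α) *
          (phat (x 0) * ∏ i : Fin t, Phat (x i.castSucc) (x i.succ)) ^ α))
    (α : ℝ) :
    (∀ t : ℕ, et α t = Real.log (∑ x : A, ∑ y : A, q α x * (Q α ^ t) x y))
    ∧ (∀ x y : A, ∃ k : ℕ, 1 ≤ k ∧ 0 < (Q α ^ k) x y)
    ∧ ∃ rα : ℝ, 0 < rα
        ∧ spectralRadius ℂ ((Q α).map (Complex.ofReal ·)) = ENNReal.ofReal rα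
        ∧ Filter.Tendsto (fun t : ℕ => ((t : ℝ) + 1)⁻¹ * et α t)
            Filter.atTop (nhds (Real.log rα)) := by
  have hne : Nonempty A := Fintype.card_pos_iff.mp (by omega)
  -- basic positivity facts about Q α
  have hQnn : ∀ x y, 0 ≤ Q α x y := fun x y => by
    rw [hQ]
    exact mul_nonneg (Real.rpow_nonneg (hPnonneg x y) _) (Real.rpow_nonneg (hPhatnonneg x y) _)
  have hPQ : ∀ x y, 0 < P x y → 0 < Q α x y := by
    intro x y h
    have hhat : 0 < Phat x y := lt_of_le_of_ne (hPhatnonneg x y)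
      (fun h' => absurd ((hzero x y).mpr h'.symm) (ne_of_gt h))
    rw [hQ]
    exact mul_pos (Real.rpow_pos_of_pos h _) (Real.rpow_pos_of_pos hhat _)
  have hQP : ∀ x y, 0 < Q α x y → 0 < P x y := by
    intro x y h
    rcases (hPnonneg x y).lt_or_eq with h' | h'
    · exact h'
    · exfalso
      have hhat : Phat x y = 0 := (hzero x y).mp h'.symm
      rw [hQ, ← h', hhat] at h
      rcases eq_or_ne (1 - α) 0 with h1 | h1
      · have h2 : α ≠ 0 := fun h2 => by rw [h2] at h1; norm_num at h1
        rw [Real.zero_rpow h2, mul_zero] at h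
        exact lt_irrefl _ h
      · rw [Real.zero_rpow h1, zero_mul] at h
        exact lt_irrefl _ h
  -- first conjunct
  have hconj1 : ∀ t : ℕ, et α t = Real.log (∑ x : A, ∑ y : A, q α x * (Q α ^ t) x y) := by
    intro t
    rw [het]
    congr 1
    rw [← epaux_key (Q α) t (q α)]
    apply Finset.sum_congr rfl
    intro x _
    have hp1 : (0:ℝ) ≤ p (x 0) := (hppos _).le
    have hp2 : (0:ℝ) ≤ ∏ i : Fin t, P (x i.castSucc) (x i.succ) :=
      Finset.prod_nonneg fun i _ => hPnonneg _ _
    have hp3 : (0:ℝ) ≤ phat (x 0) := (hphatpos _).le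
    have hp4 : (0:ℝ) ≤ ∏ i : Fin t, Phat (x i.castSucc) (x i.succ) :=
      Finset.prod_nonneg fun i _ => hPhatnonneg _ _
    rw [Real.mul_rpow hp1 hp2, Real.mul_rpow hp3 hp4, hq,
      ← Real.finset_prod_rpow _ _ (fun i _ => hPnonneg _ _) _,
      ← Real.finset_prod_rpow _ _ (fun i _ => hPhatnonneg _ _) _]
    rw [show ∀ a b c d : ℝ, a * b * (c * d) = (a * c) * (b * d) from fun a b c d => by ring]
    congr 1
    rw [← Finset.prod_mul_distrib]
    exact Finset.prod_congr rfl fun i _ => (hQ α _ _).symm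
  refine ⟨hconj1, fun x y => ?_, ?_⟩
  · obtain ⟨k, hk, hpos⟩ := hPirr x y
    exact ⟨k, hk, epaux_pattern P (Q α) hPnonneg hQnn hPQ k x y hpos⟩
  · have hQirr : ∀ x y, ∃ k : ℕ, 1 ≤ k ∧ 0 < (Q α ^ k) x y := fun x y => by
      obtain ⟨k, hk, hpos⟩ := hPirr x y
      exact ⟨k, hk, epaux_pattern P (Q α) hPnonneg hQnn hPQ k x y hpos⟩
    have hrow : ∀ x, ∃ y, 0 < Q α x y := by
      intro x
      have : 0 < ∑ y, P x y := by rw [hProw]; norm_num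
      obtain ⟨y, -, hy⟩ := epaux_exists_pos this
      exact ⟨y, hPQ x y hy⟩
    have hqpos : ∀ x, 0 < q α x := fun x => by
      rw [hq]
      exact mul_pos (Real.rpow_pos_of_pos (hppos x) _) (Real.rpow_pos_of_pos (hphatpos x) _)
    obtain ⟨r, hr, hsr, hlim⟩ := epaux_pressure (Q α) hQnn hQirr hrow (q α) hqpos
    refine ⟨r, hr, hsr, ?_⟩
    refine hlim.congr fun t => ?_
    rw [hconj1 t]
end
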